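/- arXiv:2408.08550 — 5 statements merged into one kernel-verified Lean document; each statement's English description precedes it below -/
import Mathlib

section
/- The sequentially composed OT equals the monolithic OT with the tropically composed cost matrix: for oOTs A = (m, l, C^A), B = (l, n, C^B) and distributions a ∈ Δ^m, b ∈ Δ^n, the minimum of ⟨C^A, P^A⟩ + ⟨C^B, P^B⟩ over feasible (P^A, P^B) equals the minimum of ⟨C^A ⨟ C^B, P⟩ over couplings P of a and b. -/
open BigOperators

noncomputable def seqR {m l n : ℕ} (X : Matrix (Fin m) (Fin l) ℝ)
    (Y : Matrix (Fin l) (Fin n) ℝ) : Matrix (Fin m) (Fin n) ℝ :=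
  fun i j => ⨅ k : Fin l, (X i k + Y k j)

/-- Frobenius inner product of real matrices. -/
def dotM {m n : ℕ} (X Y : Matrix (Fin m) (Fin n) ℝ) : ℝ := ∑ i, ∑ j, X i j * Y i j

lemma dotM_lower {m n : ℕ} (C P : Matrix (Fin m) (Fin n) ℝ)
    (h0 : ∀ i j, 0 ≤ P i j) (h1 : ∀ i j, P i j ≤ 1) :
    -(∑ i, ∑ j, |C i j|) ≤ dotM C P := by
  have key : ∀ i j, -|C i j| ≤ C i j * P i j := by
    intro i j
    nlinarith [neg_abs_le (C i j), abs_nonneg (C i j), h0 i j, h1 i j]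
  calc -(∑ i, ∑ j, |C i j|) = ∑ i, ∑ j, -|C i j| := by simp
    _ ≤ dotM C P := Finset.sum_le_sum fun i _ => Finset.sum_le_sum fun j _ => key i j

lemma exists_seq_of_coupling {m l n : ℕ} (hl : 0 < l)
    (CA : Matrix (Fin m) (Fin l) ℝ) (CB : Matrix (Fin l) (Fin n) ℝ)
    (P : Matrix (Fin m) (Fin n) ℝ) (hP0 : ∀ i j, 0 ≤ P i j) :
    ∃ (PA : Matrix (Fin m) (Fin l) ℝ) (PB : Matrix (Fin l) (Fin n) ℝ),
      (∀ i k, 0 ≤ PA i k) ∧ (∀ k j, 0 ≤ PB k j) ∧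
      (∀ i, ∑ k, PA i k = ∑ j, P i j) ∧ (∀ j, ∑ k, PB k j = ∑ i, P i j) ∧
      (∀ k, ∑ i, PA i k = ∑ j, PB k j) ∧
      dotM CA PA + dotM CB PB = dotM (seqR CA CB) P := by
  haveI : Nonempty (Fin l) := ⟨⟨0, hl⟩⟩
  have hmin : ∀ i j, ∃ k : Fin l, seqR CA CB i j = CA i k + CB k j := by
    intro i j
    obtain ⟨k, hk⟩ := Finite.exists_min (fun k : Fin l => CA i k + CB k j)
    exact ⟨k, le_antisymm (ciInf_le (Finite.bddBelow_range _) k) (le_ciInf hk)⟩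
  choose κ hκ using hmin
  refine ⟨fun i k => ∑ j, if κ i j = k then P i j else 0,
          fun k j => ∑ i, if κ i j = k then P i j else 0, ?_, ?_, ?_, ?_, ?_, ?_⟩
  · intro i k; refine Finset.sum_nonneg fun j _ => ?_; split <;> [exact hP0 i j; exact le_rfl]
  · intro k j; refine Finset.sum_nonneg fun i _ => ?_; split <;> [exact hP0 i j; exact le_rfl]
  · intro i; rw [Finset.sum_comm]; simp
  · intro j; rw [Finset.sum_comm]; simp
  · intro k; rw [Finset.sum_comm]
  · unfold dotM
    have h1 : ∀ i, ∑ k, CA i k * ∑ j, (if κ i j = k then P i j else 0)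
        = ∑ j, CA i (κ i j) * P i j := by
      intro i
      simp only [Finset.mul_sum, mul_ite, mul_zero]
      rw [Finset.sum_comm]
      simp
    have h2 : ∑ k, ∑ j, CB k j * ∑ i, (if κ i j = k then P i j else 0)
        = ∑ i, ∑ j, CB (κ i j) j * P i j := by
      simp only [Finset.mul_sum, mul_ite, mul_zero]
      rw [Finset.sum_comm]
      rw [Finset.sum_congr rfl fun j (_ : j ∈ Finset.univ) => Finset.sum_comm]
      rw [Finset.sum_comm]
      simp
    rw [h2]
    rw [← Finset.sum_add_distrib]
    refine Finset.sum_congr rfl fun i _ => ?_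
    rw [h1 i, ← Finset.sum_add_distrib]
    refine Finset.sum_congr rfl fun j _ => ?_
    rw [hκ i j]; ring

lemma exists_coupling_of_seq {m l n : ℕ}
    (CA : Matrix (Fin m) (Fin l) ℝ) (CB : Matrix (Fin l) (Fin n) ℝ)
    (PA : Matrix (Fin m) (Fin l) ℝ) (PB : Matrix (Fin l) (Fin n) ℝ)
    (hA0 : ∀ i k, 0 ≤ PA i k) (hB0 : ∀ k j, 0 ≤ PB k j)
    (hmid : ∀ k, ∑ i, PA i k = ∑ j, PB k j) :
    ∃ P : Matrix (Fin m) (Fin n) ℝ, (∀ i j, 0 ≤ P i j) ∧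
      (∀ i, ∑ j, P i j = ∑ k, PA i k) ∧ (∀ j, ∑ i, P i j = ∑ k, PB k j) ∧
      dotM (seqR CA CB) P ≤ dotM CA PA + dotM CB PB := by
  set c : Fin l → ℝ := fun k => ∑ i, PA i k with hc
  have hc0 : ∀ k, 0 ≤ c k := fun k => Finset.sum_nonneg fun i _ => hA0 i k
  have hAz : ∀ k, c k = 0 → ∀ i, PA i k = 0 := by
    intro k hk i
    exact (Finset.sum_eq_zero_iff_of_nonneg fun i _ => hA0 i k).mp hk i (Finset.mem_univ i)
  have hBz : ∀ k, c k = 0 → ∀ j, PB k j = 0 := by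
    intro k hk j
    have : ∑ j, PB k j = 0 := by rw [← hmid k]; exact hk
    exact (Finset.sum_eq_zero_iff_of_nonneg fun j _ => hB0 k j).mp this j (Finset.mem_univ j)
  refine ⟨fun i j => ∑ k, PA i k * PB k j / c k, ?_, ?_, ?_, ?_⟩
  · intro i j
    exact Finset.sum_nonneg fun k _ => div_nonneg (mul_nonneg (hA0 i k) (hB0 k j)) (hc0 k)
  · intro i
    rw [Finset.sum_comm]
    refine Finset.sum_congr rfl fun k _ => ?_
    by_cases hk : c k = 0
    · simp [hAz k hk i, hk]
    · simp only [mul_div_right_comm]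
      rw [← Finset.mul_sum, ← hmid k, div_mul_cancel₀ _ hk]
  · intro j
    rw [Finset.sum_comm]
    refine Finset.sum_congr rfl fun k _ => ?_
    by_cases hk : c k = 0
    · simp only [hBz k hk j, mul_zero, zero_div, Finset.sum_const_zero]
    · have : ∀ i, PA i k * PB k j / c k = PA i k * (PB k j / c k) := fun i => mul_div_assoc _ _ _
      simp only [this]
      rw [← Finset.sum_mul]
      show c k * _ = _
      field_simp
  · unfold dotM
    have key : ∀ i j, seqR CA CB i j * ∑ k, PA i k * PB k j / c k
        ≤ ∑ k, (CA i k + CB k j) * (PA i k * PB k j / c k) := by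
      intro i j
      rw [Finset.mul_sum]
      refine Finset.sum_le_sum fun k _ => ?_
      refine mul_le_mul_of_nonneg_right ?_
        (div_nonneg (mul_nonneg (hA0 i k) (hB0 k j)) (hc0 k))
      exact ciInf_le (Finite.bddBelow_range _) k
    calc ∑ i, ∑ j, seqR CA CB i j * ∑ k, PA i k * PB k j / c k
        ≤ ∑ i, ∑ j, ∑ k, (CA i k + CB k j) * (PA i k * PB k j / c k) :=
          Finset.sum_le_sum fun i _ => Finset.sum_le_sum fun j _ => key i j
      _ = (∑ i, ∑ k, ∑ j, CA i k * (PA i k * PB k j / c k))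
          + (∑ k, ∑ j, ∑ i, CB k j * (PA i k * PB k j / c k)) := by
          simp only [add_mul, Finset.sum_add_distrib]
          congr 1
          · exact Finset.sum_congr rfl fun i _ => Finset.sum_comm
          · rw [Finset.sum_congr rfl fun y (_ : y ∈ Finset.univ) => Finset.sum_comm]
            rw [Finset.sum_comm]
            exact Finset.sum_congr rfl fun k _ => Finset.sum_comm
      _ = (∑ i, ∑ k, CA i k * PA i k) + (∑ k, ∑ j, CB k j * PB k j) := by
          congr 1
          · refine Finset.sum_congr rfl fun i _ => Finset.sum_congr rfl fun k _ => ?_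
            by_cases hk : c k = 0
            · simp [hAz k hk i]
            · rw [← Finset.mul_sum]
              congr 1
              simp only [mul_div_assoc, ← Finset.mul_sum]
              rw [← Finset.sum_div, ← hmid k, div_self hk, mul_one]
          · refine Finset.sum_congr rfl fun k _ => Finset.sum_congr rfl fun j _ => ?_
            by_cases hk : c k = 0
            · simp [hBz k hk j]
            · rw [← Finset.mul_sum]
              congr 1
              have : ∀ i, PA i k * PB k j / c k = PA i k * (PB k j / c k) :=
                fun i => mul_div_assoc _ _ _
              simp only [this]
              rw [← Finset.sum_mul]
              show c k * _ = _
              field_simp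

theorem seqOT_eq_monolithicOT {m l n : ℕ} (hl : 0 < l)
    (CA : Matrix (Fin m) (Fin l) ℝ) (CB : Matrix (Fin l) (Fin n) ℝ)
    (a : Fin m → ℝ) (b : Fin n → ℝ)
    (ha : (∀ i, 0 ≤ a i) ∧ ∑ i, a i = 1) (hb : (∀ j, 0 ≤ b j) ∧ ∑ j, b j = 1) :
    sInf {v : ℝ | ∃ (PA : Matrix (Fin m) (Fin l) ℝ) (PB : Matrix (Fin l) (Fin n) ℝ),
        (∀ i k, 0 ≤ PA i k) ∧ (∀ k j, 0 ≤ PB k j) ∧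
        (∀ i, ∑ k, PA i k = a i) ∧ (∀ j, ∑ k, PB k j = b j) ∧
        (∀ k, ∑ i, PA i k = ∑ j, PB k j) ∧
        v = dotM CA PA + dotM CB PB}
    = sInf {v : ℝ | ∃ P : Matrix (Fin m) (Fin n) ℝ,
        (∀ i j, 0 ≤ P i j) ∧ (∀ i, ∑ j, P i j = a i) ∧ (∀ j, ∑ i, P i j = b j) ∧
        v = dotM (seqR CA CB) P} := by
  obtain ⟨ha0, ha1⟩ := ha
  obtain ⟨hb0, hb1⟩ := hb
  haveI : Nonempty (Fin l) := ⟨⟨0, hl⟩⟩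
  have hlR : (l : ℝ) ≠ 0 := Nat.cast_ne_zero.mpr hl.ne'
  have haU : ∀ i, a i ≤ 1 := fun i =>
    ha1 ▸ Finset.single_le_sum (fun j _ => ha0 j) (Finset.mem_univ i)
  have hbU : ∀ j, b j ≤ 1 := fun j =>
    hb1 ▸ Finset.single_le_sum (fun i _ => hb0 i) (Finset.mem_univ j)
  set S := {v : ℝ | ∃ (PA : Matrix (Fin m) (Fin l) ℝ) (PB : Matrix (Fin l) (Fin n) ℝ),
      (∀ i k, 0 ≤ PA i k) ∧ (∀ k j, 0 ≤ PB k j) ∧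
      (∀ i, ∑ k, PA i k = a i) ∧ (∀ j, ∑ k, PB k j = b j) ∧
      (∀ k, ∑ i, PA i k = ∑ j, PB k j) ∧
      v = dotM CA PA + dotM CB PB} with hS
  set T := {v : ℝ | ∃ P : Matrix (Fin m) (Fin n) ℝ,
      (∀ i j, 0 ≤ P i j) ∧ (∀ i, ∑ j, P i j = a i) ∧ (∀ j, ∑ i, P i j = b j) ∧
      v = dotM (seqR CA CB) P} with hT
  have hbddS : BddBelow S := by
    refine ⟨-(∑ i, ∑ k, |CA i k|) + -(∑ k, ∑ j, |CB k j|), ?_⟩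
    rintro v ⟨PA, PB, hA0, hB0, hAa, hBb, -, rfl⟩
    have hA1 : ∀ i k, PA i k ≤ 1 := fun i k =>
      ((Finset.single_le_sum (fun k' _ => hA0 i k') (Finset.mem_univ k)).trans
        (hAa i).le).trans (haU i)
    have hB1 : ∀ k j, PB k j ≤ 1 := fun k j =>
      ((Finset.single_le_sum (fun k' (_ : k' ∈ Finset.univ) => hB0 k' j)
        (Finset.mem_univ k)).trans (hBb j).le).trans (hbU j)
    exact add_le_add (dotM_lower CA PA hA0 hA1) (dotM_lower CB PB hB0 hB1)
  have hbddT : BddBelow T := by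
    refine ⟨-(∑ i, ∑ j, |seqR CA CB i j|), ?_⟩
    rintro v ⟨P, hP0, hPa, hPb, rfl⟩
    have hP1 : ∀ i j, P i j ≤ 1 := fun i j =>
      ((Finset.single_le_sum (fun j' _ => hP0 i j') (Finset.mem_univ j)).trans
        (hPa i).le).trans (haU i)
    exact dotM_lower _ P hP0 hP1
  have hneS : S.Nonempty := by
    refine ⟨_, fun i k => a i / l, fun k j => b j / l, ?_, ?_, ?_, ?_, ?_, rfl⟩
    · intro i k; exact div_nonneg (ha0 i) (Nat.cast_nonneg l)
    · intro k j; exact div_nonneg (hb0 j) (Nat.cast_nonneg l)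
    · intro i
      rw [Finset.sum_const, Finset.card_univ, Fintype.card_fin, nsmul_eq_mul]
      field_simp
    · intro j
      rw [Finset.sum_const, Finset.card_univ, Fintype.card_fin, nsmul_eq_mul]
      field_simp
    · intro k
      rw [← Finset.sum_div, ← Finset.sum_div, ha1, hb1]
  have hneT : T.Nonempty := by
    refine ⟨_, fun i j => a i * b j, ?_, ?_, ?_, rfl⟩
    · intro i j; exact mul_nonneg (ha0 i) (hb0 j)
    · intro i; rw [← Finset.mul_sum, hb1, mul_one]
    · intro j; rw [← Finset.sum_mul, ha1, one_mul]
  refine le_antisymm (le_csInf hneT ?_) (le_csInf hneS ?_)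
  · rintro v ⟨P, hP0, hPa, hPb, rfl⟩
    obtain ⟨PA, PB, hA0, hB0, hAr, hBr, hmid, hval⟩ :=
      exists_seq_of_coupling hl CA CB P hP0
    have hmem : dotM CA PA + dotM CB PB ∈ S :=
      ⟨PA, PB, hA0, hB0, fun i => (hAr i).trans (hPa i),
        fun j => (hBr j).trans (hPb j), hmid, rfl⟩
    exact (csInf_le hbddS hmem).trans hval.le
  · rintro v ⟨PA, PB, hA0, hB0, hAa, hBb, hmid, rfl⟩
    obtain ⟨P, hP0, hPr, hPc, hle⟩ := exists_coupling_of_seq CA CB PA PB hA0 hB0 hmid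
    have hmem : dotM (seqR CA CB) P ∈ T :=
      ⟨P, hP0, fun i => (hPr i).trans (hAa i), fun j => (hPc j).trans (hBb j), rfl⟩
    exact (csInf_le hbddT hmem).trans hle
end

section
/- The parallelly composed OT equals the monolithic OT with the block-diagonal cost matrix: assuming Σ_{i=1}^m a_i = Σ_{j=1}^n b_j, the minimum of ⟨C^A, P^A⟩ + ⟨C^B, P^B⟩ over feasible (P^A, P^B) equals the infimum of ⟨C^A ⊗ C^B, P⟩ over couplings P ∈ ℝ_{≥0}^((m+k)×(n+l)) of a and b, where ⟨·,·⟩ uses the convention ∞ · 0 = 0. -/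
open BigOperators

noncomputable def parC {m n k l : ℕ} (A : Matrix (Fin m) (Fin n) (WithTop ℝ))
    (B : Matrix (Fin k) (Fin l) (WithTop ℝ)) :
    Matrix (Fin (m + k)) (Fin (n + l)) (WithTop ℝ) :=
  fun i j =>
    if h1 : (i : ℕ) < m then
      if h2 : (j : ℕ) < n then A ⟨i, h1⟩ ⟨j, h2⟩ else ⊤
    else
      if h2 : (j : ℕ) < n then ⊤
      else B ⟨(i : ℕ) - m, by have := i.isLt; omega⟩ ⟨(j : ℕ) - n, by have := j.isLt; omega⟩

/-- Inner product of an extended-real cost matrix with a nonnegative real plan,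
with multiplication in `WithTop ℝ` (so `∞ * 0 = 0`). -/
noncomputable def dotT {m n : ℕ} (X : Matrix (Fin m) (Fin n) (WithTop ℝ))
    (P : Matrix (Fin m) (Fin n) ℝ) : WithTop ℝ :=
  ∑ i, ∑ j, X i j * ((P i j : ℝ) : WithTop ℝ)

-- auxiliary lemmas

lemma parC_cc {m n k l : ℕ} (A : Matrix (Fin m) (Fin n) (WithTop ℝ))
    (B : Matrix (Fin k) (Fin l) (WithTop ℝ)) (i : Fin m) (j : Fin n) :
    parC A B (Fin.castAdd k i) (Fin.castAdd l j) = A i j := by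
  simp [parC, Fin.castAdd, Fin.castLE]

lemma parC_cn {m n k l : ℕ} (A : Matrix (Fin m) (Fin n) (WithTop ℝ))
    (B : Matrix (Fin k) (Fin l) (WithTop ℝ)) (i : Fin m) (j : Fin l) :
    parC A B (Fin.castAdd k i) (Fin.natAdd n j) = ⊤ := by
  simp [parC, Fin.castAdd, Fin.castLE, Fin.natAdd]

lemma parC_nc {m n k l : ℕ} (A : Matrix (Fin m) (Fin n) (WithTop ℝ))
    (B : Matrix (Fin k) (Fin l) (WithTop ℝ)) (i : Fin k) (j : Fin n) :
    parC A B (Fin.natAdd m i) (Fin.castAdd l j) = ⊤ := by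
  simp [parC, Fin.castAdd, Fin.castLE, Fin.natAdd]

lemma parC_nn {m n k l : ℕ} (A : Matrix (Fin m) (Fin n) (WithTop ℝ))
    (B : Matrix (Fin k) (Fin l) (WithTop ℝ)) (i : Fin k) (j : Fin l) :
    parC A B (Fin.natAdd m i) (Fin.natAdd n j) = B i j := by
  have h1 : ¬ ((Fin.natAdd m i : Fin (m+k)) : ℕ) < m := by simp [Fin.natAdd]
  have h2 : ¬ ((Fin.natAdd n j : Fin (n+l)) : ℕ) < n := by simp [Fin.natAdd]
  simp only [parC, dif_neg h1, dif_neg h2]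
  congr 1 <;> ext <;> simp [Fin.natAdd]

/-- Existence of a coupling of two nonnegative vectors with equal total mass. -/
lemma exists_coupling {p q : ℕ} (u : Fin p → ℝ) (v : Fin q → ℝ)
    (hu : ∀ i, 0 ≤ u i) (hv : ∀ j, 0 ≤ v j) (h : ∑ i, u i = ∑ j, v j) :
    ∃ Q : Matrix (Fin p) (Fin q) ℝ, (∀ i j, 0 ≤ Q i j) ∧
      (∀ i, ∑ j, Q i j = u i) ∧ (∀ j, ∑ i, Q i j = v j) := by
  set s := ∑ i, u i with hs
  by_cases h0 : s = 0
  · have hu0 : ∀ i, u i = 0 := fun i =>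
      (Finset.sum_eq_zero_iff_of_nonneg (fun i _ => hu i)).1 h0 i (Finset.mem_univ i)
    have hv0 : ∀ j, v j = 0 := fun j =>
      (Finset.sum_eq_zero_iff_of_nonneg (fun j _ => hv j)).1 (h ▸ h0) j (Finset.mem_univ j)
    exact ⟨0, by simp, fun i => by simp [hu0], fun j => by simp [hv0]⟩
  · have hspos : 0 < s := lt_of_le_of_ne (Finset.sum_nonneg fun i _ => hu i) (Ne.symm h0)
    refine ⟨fun i j => u i * v j / s, fun i j =>
      div_nonneg (mul_nonneg (hu i) (hv j)) hspos.le, fun i => ?_, fun j => ?_⟩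
    · rw [← Finset.sum_div, ← Finset.mul_sum, ← h]
      field_simp
    · rw [← Finset.sum_div, ← Finset.sum_mul, ← hs]
      field_simp


/-- Block-diagonal plan built from two plans. -/
noncomputable def blkP {m n k l : ℕ} (PA : Matrix (Fin m) (Fin n) ℝ)
    (PB : Matrix (Fin k) (Fin l) ℝ) : Matrix (Fin (m + k)) (Fin (n + l)) ℝ :=
  fun i j =>
    if h1 : (i : ℕ) < m then
      if h2 : (j : ℕ) < n then PA ⟨i, h1⟩ ⟨j, h2⟩ else 0
    else
      if h2 : (j : ℕ) < n then 0
      else PB ⟨(i : ℕ) - m, by have := i.isLt; omega⟩ ⟨(j : ℕ) - n, by have := j.isLt; omega⟩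

lemma blkP_cc {m n k l : ℕ} (PA : Matrix (Fin m) (Fin n) ℝ) (PB : Matrix (Fin k) (Fin l) ℝ)
    (i : Fin m) (j : Fin n) : blkP PA PB (Fin.castAdd k i) (Fin.castAdd l j) = PA i j := by
  simp [blkP, Fin.castAdd, Fin.castLE]

lemma blkP_cn {m n k l : ℕ} (PA : Matrix (Fin m) (Fin n) ℝ) (PB : Matrix (Fin k) (Fin l) ℝ)
    (i : Fin m) (j : Fin l) : blkP PA PB (Fin.castAdd k i) (Fin.natAdd n j) = 0 := by
  simp [blkP, Fin.castAdd, Fin.castLE, Fin.natAdd]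

lemma blkP_nc {m n k l : ℕ} (PA : Matrix (Fin m) (Fin n) ℝ) (PB : Matrix (Fin k) (Fin l) ℝ)
    (i : Fin k) (j : Fin n) : blkP PA PB (Fin.natAdd m i) (Fin.castAdd l j) = 0 := by
  simp [blkP, Fin.castAdd, Fin.castLE, Fin.natAdd]

lemma blkP_nn {m n k l : ℕ} (PA : Matrix (Fin m) (Fin n) ℝ) (PB : Matrix (Fin k) (Fin l) ℝ)
    (i : Fin k) (j : Fin l) : blkP PA PB (Fin.natAdd m i) (Fin.natAdd n j) = PB i j := by
  have h1 : ¬ ((Fin.natAdd m i : Fin (m+k)) : ℕ) < m := by simp [Fin.natAdd]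
  have h2 : ¬ ((Fin.natAdd n j : Fin (n+l)) : ℕ) < n := by simp [Fin.natAdd]
  simp only [blkP, dif_neg h1, dif_neg h2]
  congr 1 <;> ext <;> simp [Fin.natAdd]

lemma dotT_parC {m n k l : ℕ} (CA : Matrix (Fin m) (Fin n) ℝ) (CB : Matrix (Fin k) (Fin l) ℝ)
    (P : Matrix (Fin (m + k)) (Fin (n + l)) ℝ)
    (h1 : ∀ (i : Fin m) (j : Fin l), P (Fin.castAdd k i) (Fin.natAdd n j) = 0)
    (h2 : ∀ (i : Fin k) (j : Fin n), P (Fin.natAdd m i) (Fin.castAdd l j) = 0) :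
    dotT (parC (fun i j => ((CA i j : ℝ) : WithTop ℝ))
               (fun i j => ((CB i j : ℝ) : WithTop ℝ))) P
      = ((dotM CA (fun i j => P (Fin.castAdd k i) (Fin.castAdd l j))
          + dotM CB (fun i j => P (Fin.natAdd m i) (Fin.natAdd n j)) : ℝ) : WithTop ℝ) := by
  rw [dotT]
  rw [Fin.sum_univ_add]
  have eA : ∀ i : Fin m,
      (∑ j : Fin (n + l), parC (fun i j => ((CA i j : ℝ) : WithTop ℝ))
        (fun i j => ((CB i j : ℝ) : WithTop ℝ)) (Fin.castAdd k i) j * ↑(P (Fin.castAdd k i) j))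
      = ((∑ j : Fin n, CA i j * P (Fin.castAdd k i) (Fin.castAdd l j) : ℝ) : WithTop ℝ) := by
    intro i
    rw [Fin.sum_univ_add]
    simp [parC_cc, parC_cn, h1]
    exact Finset.sum_congr rfl fun j _ => by
      exact congrArg (· * _) (parC_cc (fun i j => ((CA i j : ℝ) : WithTop ℝ))
        (fun i j => ((CB i j : ℝ) : WithTop ℝ)) i j)
  have eB : ∀ i : Fin k,
      (∑ j : Fin (n + l), parC (fun i j => ((CA i j : ℝ) : WithTop ℝ))
        (fun i j => ((CB i j : ℝ) : WithTop ℝ)) (Fin.natAdd m i) j * ↑(P (Fin.natAdd m i) j))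
      = ((∑ j : Fin l, CB i j * P (Fin.natAdd m i) (Fin.natAdd n j) : ℝ) : WithTop ℝ) := by
    intro i
    rw [Fin.sum_univ_add]
    simp [parC_nc, parC_nn, h2]
    exact Finset.sum_congr rfl fun j _ => by
      exact congrArg (· * _) (parC_nn (fun i j => ((CA i j : ℝ) : WithTop ℝ))
        (fun i j => ((CB i j : ℝ) : WithTop ℝ)) i j)
  simp only [eA, eB, dotM]
  push_cast
  ring_nf

theorem parOT_eq_monolithicOT {m n k l : ℕ}
    (CA : Matrix (Fin m) (Fin n) ℝ) (CB : Matrix (Fin k) (Fin l) ℝ)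
    (a : Fin (m + k) → ℝ) (b : Fin (n + l) → ℝ)
    (ha : (∀ i, 0 ≤ a i) ∧ ∑ i, a i = 1) (hb : (∀ j, 0 ≤ b j) ∧ ∑ j, b j = 1)
    (hbal : ∑ i : Fin m, a (Fin.castAdd k i) = ∑ j : Fin n, b (Fin.castAdd l j)) :
    ((sInf {v : ℝ | ∃ (PA : Matrix (Fin m) (Fin n) ℝ) (PB : Matrix (Fin k) (Fin l) ℝ),
        (∀ i j, 0 ≤ PA i j) ∧ (∀ i j, 0 ≤ PB i j) ∧
        (∀ i : Fin m, ∑ j, PA i j = a (Fin.castAdd k i)) ∧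
        (∀ j : Fin n, ∑ i, PA i j = b (Fin.castAdd l j)) ∧
        (∀ i : Fin k, ∑ j, PB i j = a (Fin.natAdd m i)) ∧
        (∀ j : Fin l, ∑ i, PB i j = b (Fin.natAdd n j)) ∧
        v = dotM CA PA + dotM CB PB} : ℝ) : WithTop ℝ)
    = sInf {v : WithTop ℝ | ∃ P : Matrix (Fin (m + k)) (Fin (n + l)) ℝ,
        (∀ i j, 0 ≤ P i j) ∧ (∀ i, ∑ j, P i j = a i) ∧ (∀ j, ∑ i, P i j = b j) ∧
        v = dotT (parC (fun i j => ((CA i j : ℝ) : WithTop ℝ))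
                        (fun i j => ((CB i j : ℝ) : WithTop ℝ))) P} := by
  classical
  obtain ⟨han, hasum⟩ := ha
  obtain ⟨hbn, hbsum⟩ := hb
  set SL : Set ℝ := {v : ℝ | ∃ (PA : Matrix (Fin m) (Fin n) ℝ) (PB : Matrix (Fin k) (Fin l) ℝ),
        (∀ i j, 0 ≤ PA i j) ∧ (∀ i j, 0 ≤ PB i j) ∧
        (∀ i : Fin m, ∑ j, PA i j = a (Fin.castAdd k i)) ∧
        (∀ j : Fin n, ∑ i, PA i j = b (Fin.castAdd l j)) ∧
        (∀ i : Fin k, ∑ j, PB i j = a (Fin.natAdd m i)) ∧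
        (∀ j : Fin l, ∑ i, PB i j = b (Fin.natAdd n j)) ∧
        v = dotM CA PA + dotM CB PB} with hSLdef
  set SR : Set (WithTop ℝ) := {v : WithTop ℝ |
      ∃ P : Matrix (Fin (m + k)) (Fin (n + l)) ℝ,
        (∀ i j, 0 ≤ P i j) ∧ (∀ i, ∑ j, P i j = a i) ∧ (∀ j, ∑ i, P i j = b j) ∧
        v = dotT (parC (fun i j => ((CA i j : ℝ) : WithTop ℝ))
                        (fun i j => ((CB i j : ℝ) : WithTop ℝ))) P} with hSRdef
  -- second balance condition
  have hasplit : (∑ i : Fin m, a (Fin.castAdd k i)) + ∑ i : Fin k, a (Fin.natAdd m i) = 1 := by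
    rw [← Fin.sum_univ_add]; exact hasum
  have hbsplit : (∑ j : Fin n, b (Fin.castAdd l j)) + ∑ j : Fin l, b (Fin.natAdd n j) = 1 := by
    rw [← Fin.sum_univ_add]; exact hbsum
  have hbalB : ∑ i : Fin k, a (Fin.natAdd m i) = ∑ j : Fin l, b (Fin.natAdd n j) := by
    linarith
  -- key correspondence between finite values
  have key : ∀ v : ℝ, (↑v : WithTop ℝ) ∈ SR ↔ v ∈ SL := by
    intro v
    constructor
    · rintro ⟨P, hP0, hPr, hPc, hv⟩
      have hfin : dotT (parC (fun i j => ((CA i j : ℝ) : WithTop ℝ))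
          (fun i j => ((CB i j : ℝ) : WithTop ℝ))) P ≠ ⊤ := hv ▸ WithTop.coe_ne_top
      have hterm : ∀ (i : Fin (m + k)) (j : Fin (n + l)),
          parC (fun i j => ((CA i j : ℝ) : WithTop ℝ))
            (fun i j => ((CB i j : ℝ) : WithTop ℝ)) i j * ((P i j : ℝ) : WithTop ℝ) ≠ ⊤ := by
        intro i j hT
        exact hfin (by
          rw [dotT]
          exact WithTop.sum_eq_top.2 ⟨i, Finset.mem_univ i,
            WithTop.sum_eq_top.2 ⟨j, Finset.mem_univ j, hT⟩⟩)
      have h1 : ∀ (i : Fin m) (j : Fin l), P (Fin.castAdd k i) (Fin.natAdd n j) = 0 := by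
        intro i j
        by_contra hne
        exact hterm (Fin.castAdd k i) (Fin.natAdd n j) (by
          refine (congrArg (· * _) (parC_cn (fun i j => ((CA i j : ℝ) : WithTop ℝ))
            (fun i j => ((CB i j : ℝ) : WithTop ℝ)) i j)).trans ?_
          exact WithTop.top_mul (by exact_mod_cast hne))
      have h2 : ∀ (i : Fin k) (j : Fin n), P (Fin.natAdd m i) (Fin.castAdd l j) = 0 := by
        intro i j
        by_contra hne
        exact hterm (Fin.natAdd m i) (Fin.castAdd l j) (by
          refine (congrArg (· * _) (parC_nc (fun i j => ((CA i j : ℝ) : WithTop ℝ))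
            (fun i j => ((CB i j : ℝ) : WithTop ℝ)) i j)).trans ?_
          exact WithTop.top_mul (by exact_mod_cast hne))
      refine ⟨fun i j => P (Fin.castAdd k i) (Fin.castAdd l j),
        fun i j => P (Fin.natAdd m i) (Fin.natAdd n j),
        fun i j => hP0 _ _, fun i j => hP0 _ _, ?_, ?_, ?_, ?_, ?_⟩
      · intro i
        have := hPr (Fin.castAdd k i)
        rw [Fin.sum_univ_add] at this
        simpa [h1] using this
      · intro j
        have := hPc (Fin.castAdd l j)
        rw [Fin.sum_univ_add] at this
        simpa [h2] using this
      · intro i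
        have := hPr (Fin.natAdd m i)
        rw [Fin.sum_univ_add] at this
        simpa [h2] using this
      · intro j
        have := hPc (Fin.natAdd n j)
        rw [Fin.sum_univ_add] at this
        simpa [h1] using this
      · have := hv
        rw [dotT_parC CA CB P h1 h2] at this
        exact_mod_cast this
    · rintro ⟨PA, PB, hPA0, hPB0, hPAr, hPAc, hPBr, hPBc, hv⟩
      refine ⟨blkP PA PB, ?_, ?_, ?_, ?_⟩
      · intro i j
        dsimp [blkP]
        split_ifs <;> first | exact hPA0 _ _ | exact hPB0 _ _ | exact le_refl 0
      · intro i
        induction i using Fin.addCases with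
        | left i => rw [Fin.sum_univ_add]; simp [blkP_cc, blkP_cn, hPAr i]
        | right i => rw [Fin.sum_univ_add]; simp [blkP_nc, blkP_nn, hPBr i]
      · intro j
        induction j using Fin.addCases with
        | left j => rw [Fin.sum_univ_add]; simp [blkP_cc, blkP_nc, hPAc j]
        | right j => rw [Fin.sum_univ_add]; simp [blkP_cn, blkP_nn, hPBc j]
      · rw [dotT_parC CA CB (blkP PA PB) (fun i j => blkP_cn PA PB i j)
          (fun i j => blkP_nc PA PB i j)]
        rw [hv]
        norm_cast
        simp only [blkP_cc, blkP_nn]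
  -- nonemptiness
  obtain ⟨QA, hQA0, hQAr, hQAc⟩ := exists_coupling (fun i => a (Fin.castAdd k i))
    (fun j => b (Fin.castAdd l j)) (fun i => han _) (fun j => hbn _) hbal
  obtain ⟨QB, hQB0, hQBr, hQBc⟩ := exists_coupling (fun i => a (Fin.natAdd m i))
    (fun j => b (Fin.natAdd n j)) (fun i => han _) (fun j => hbn _) hbalB
  have hv0 : dotM CA QA + dotM CB QB ∈ SL :=
    ⟨QA, QB, hQA0, hQB0, hQAr, hQAc, hQBr, hQBc, rfl⟩
  have hnotsub : ¬ SR ⊆ {⊤} := by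
    intro hsub
    have := hsub ((key _).2 hv0)
    simp at this
  -- boundedness below
  have hboundSL : ∀ w ∈ SL, -((∑ i, ∑ j, |CA i j|) + (∑ i, ∑ j, |CB i j|)) ≤ w := by
    rintro w ⟨PA, PB, hPA0, hPB0, hPAr, hPAc, hPBr, hPBc, hv⟩
    have hPA1 : ∀ i j, PA i j ≤ 1 := by
      intro i j
      calc PA i j ≤ ∑ j', PA i j' :=
            Finset.single_le_sum (fun j' _ => hPA0 i j') (Finset.mem_univ j)
        _ = a (Fin.castAdd k i) := hPAr i
        _ ≤ ∑ i', a i' := Finset.single_le_sum (fun i' _ => han i') (Finset.mem_univ _)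
        _ = 1 := hasum
    have hPB1 : ∀ i j, PB i j ≤ 1 := by
      intro i j
      calc PB i j ≤ ∑ j', PB i j' :=
            Finset.single_le_sum (fun j' _ => hPB0 i j') (Finset.mem_univ j)
        _ = a (Fin.natAdd m i) := hPBr i
        _ ≤ ∑ i', a i' := Finset.single_le_sum (fun i' _ => han i') (Finset.mem_univ _)
        _ = 1 := hasum
    have h1 := dotM_lower CA PA hPA0 hPA1
    have h2 := dotM_lower CB PB hPB0 hPB1
    rw [hv]
    linarith
  have hbdd : BddBelow SR := by
    refine ⟨((-((∑ i, ∑ j, |CA i j|) + (∑ i, ∑ j, |CB i j|)) : ℝ) : WithTop ℝ), fun x hx => ?_⟩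
    induction x using WithTop.recTopCoe with
    | top => exact le_top
    | coe w => exact WithTop.coe_le_coe.2 (hboundSL w ((key w).1 hx))
  rw [WithTop.sInf_eq hnotsub hbdd]
  congr 1
  congr 1
  ext w
  simpa using (key w).symm
end

section
/- Strong duality for the sequentially composed OT: the minimum of ⟨C^A, P^A⟩ + ⟨C^B, P^B⟩ over feasible plans equals the supremum of Σ_i f_i a_i + Σ_j g_j b_j over f ∈ ℝ^m, g ∈ ℝ^n satisfying f_i + g_j ≤ C^A_{ik} + C^B_{kj} for all i, k, j. -/
open BigOperators

namespace SeqOTAux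

variable {m l n : ℕ}

/-- weak duality -/
lemma weak_duality (CA : Matrix (Fin m) (Fin l) ℝ) (CB : Matrix (Fin l) (Fin n) ℝ)
    (PA : Matrix (Fin m) (Fin l) ℝ) (PB : Matrix (Fin l) (Fin n) ℝ)
    (hPA : ∀ i k, 0 ≤ PA i k) (hPB : ∀ k j, 0 ≤ PB k j)
    (hM : ∀ k, ∑ i, PA i k = ∑ j, PB k j)
    (f : Fin m → ℝ) (g : Fin n → ℝ)
    (hfg : ∀ i k j, f i + g j ≤ CA i k + CB k j) :
    ∑ i, f i * (∑ k, PA i k) + ∑ j, g j * (∑ k, PB k j) ≤ dotM CA PA + dotM CB PB := by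
  have expand : ∀ k, ∀ (F : Fin m → ℝ) (G : Fin n → ℝ),
      ∑ i, ∑ j, (F i + G j) * (PA i k * PB k j)
        = (∑ j, PB k j) * (∑ i, F i * PA i k) + (∑ i, PA i k) * (∑ j, G j * PB k j) := by
    intro k F G
    calc ∑ i, ∑ j, (F i + G j) * (PA i k * PB k j)
        = ∑ i, ∑ j, ((F i * PA i k) * PB k j + PA i k * (G j * PB k j)) := by
          refine Finset.sum_congr rfl fun i _ => Finset.sum_congr rfl fun j _ => by ring
      _ = ∑ i, ((F i * PA i k) * ∑ j, PB k j + PA i k * ∑ j, G j * PB k j) := by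
          refine Finset.sum_congr rfl fun i _ => ?_
          rw [Finset.sum_add_distrib, ← Finset.mul_sum, ← Finset.mul_sum]
      _ = (∑ i, (F i * PA i k) * ∑ j, PB k j) + ∑ i, PA i k * ∑ j, G j * PB k j :=
          Finset.sum_add_distrib
      _ = (∑ j, PB k j) * (∑ i, F i * PA i k) + (∑ i, PA i k) * (∑ j, G j * PB k j) := by
          rw [← Finset.sum_mul, ← Finset.sum_mul]; ring
  have perk : ∀ k, (∑ i, f i * PA i k) + (∑ j, g j * PB k j)
      ≤ (∑ i, CA i k * PA i k) + (∑ j, CB k j * PB k j) := by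
    intro k
    by_cases hσ : ∑ i, PA i k = 0
    · have hA0 : ∀ i, PA i k = 0 := by
        intro i
        have := (Finset.sum_eq_zero_iff_of_nonneg (fun i _ => hPA i k)).mp hσ
        exact this i (Finset.mem_univ i)
      have hσB : ∑ j, PB k j = 0 := by rw [← hM k]; exact hσ
      have hB0 : ∀ j, PB k j = 0 := by
        intro j
        have := (Finset.sum_eq_zero_iff_of_nonneg (fun j _ => hPB k j)).mp hσB
        exact this j (Finset.mem_univ j)
      simp [hA0, hB0]
    · have hσpos : 0 < ∑ i, PA i k :=
        lt_of_le_of_ne (Finset.sum_nonneg fun i _ => hPA i k) (Ne.symm hσ)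
      have pw : ∑ i, ∑ j, (f i + g j) * (PA i k * PB k j)
          ≤ ∑ i, ∑ j, (CA i k + CB k j) * (PA i k * PB k j) := by
        refine Finset.sum_le_sum fun i _ => Finset.sum_le_sum fun j _ => ?_
        exact mul_le_mul_of_nonneg_right (hfg i k j) (mul_nonneg (hPA i k) (hPB k j))
      rw [expand k f g, expand k (fun i => CA i k) (fun j => CB k j)] at pw
      rw [← hM k] at pw
      have := (mul_le_mul_iff_right₀ hσpos).mp (by
        calc (∑ i, PA i k) * ((∑ i, f i * PA i k) + (∑ j, g j * PB k j))
            = (∑ i, PA i k) * (∑ i, f i * PA i k) + (∑ i, PA i k) * (∑ j, g j * PB k j) := by ring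
          _ ≤ (∑ i, PA i k) * (∑ i, CA i k * PA i k) + (∑ i, PA i k) * (∑ j, CB k j * PB k j) := pw
          _ = (∑ i, PA i k) * ((∑ i, CA i k * PA i k) + (∑ j, CB k j * PB k j)) := by ring)
      exact this
  have lhs : ∑ i, f i * (∑ k, PA i k) + ∑ j, g j * (∑ k, PB k j)
      = ∑ k, ((∑ i, f i * PA i k) + (∑ j, g j * PB k j)) := by
    rw [Finset.sum_add_distrib]
    congr 1
    · simp_rw [Finset.mul_sum]
      rw [Finset.sum_comm]
    · simp_rw [Finset.mul_sum]
      rw [Finset.sum_comm]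
  have rhs : dotM CA PA + dotM CB PB
      = ∑ k, ((∑ i, CA i k * PA i k) + (∑ j, CB k j * PB k j)) := by
    rw [Finset.sum_add_distrib]
    congr 1
    · unfold dotM; rw [Finset.sum_comm]
  rw [lhs, rhs]
  exact Finset.sum_le_sum fun k _ => perk k

end SeqOTAux

namespace SeqOTAux

open Filter Topology

variable {m l n : ℕ}

def coneSet (CA : Matrix (Fin m) (Fin l) ℝ) (CB : Matrix (Fin l) (Fin n) ℝ) :
    Set (EuclideanSpace ℝ ((Fin m ⊕ Fin n) ⊕ Unit)) :=
  {x | ∃ (PA : Matrix (Fin m) (Fin l) ℝ) (PB : Matrix (Fin l) (Fin n) ℝ) (s : ℝ),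
    (∀ i k, 0 ≤ PA i k) ∧ (∀ k j, 0 ≤ PB k j) ∧ 0 ≤ s ∧
    (∀ i, x (Sum.inl (Sum.inl i)) = ∑ k, PA i k) ∧
    (∀ j, x (Sum.inl (Sum.inr j)) = ∑ k, PB k j) ∧
    (∀ k, ∑ i, PA i k = ∑ j, PB k j) ∧
    x (Sum.inr ()) = dotM CA PA + dotM CB PB + s}

set_option maxHeartbeats 1000000 in
lemma coneSet_isClosed (CA : Matrix (Fin m) (Fin l) ℝ) (CB : Matrix (Fin l) (Fin n) ℝ) :
    IsClosed (coneSet CA CB) := by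
  refine IsSeqClosed.isClosed ?_
  intro x p hx hxp
  choose PA PB s hPA hPB hs hu hv hMd hr using hx
  have hcoord : ∀ idx, Tendsto (fun t => x t idx) atTop (𝓝 (p idx)) := by
    intro idx
    have := ((EuclideanSpace.proj (𝕜 := ℝ) idx).continuous.tendsto p).comp hxp
    exact this
  set Ma : ℝ := (∑ i, p (Sum.inl (Sum.inl i))) + 1 with hMadef
  set Mb : ℝ := (∑ j, p (Sum.inl (Sum.inr j))) + 1 with hMbdef
  set K : ℝ := (∑ i, ∑ k, |CA i k|) * Ma + (∑ k, ∑ j, |CB k j|) * Mb with hKdef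
  set Ms : ℝ := p (Sum.inr ()) + 1 + K with hMsdef
  have hUa : Tendsto (fun t => ∑ i, x t (Sum.inl (Sum.inl i))) atTop
      (𝓝 (∑ i, p (Sum.inl (Sum.inl i)))) := tendsto_finset_sum _ fun i _ => hcoord _
  have hUb : Tendsto (fun t => ∑ j, x t (Sum.inl (Sum.inr j))) atTop
      (𝓝 (∑ j, p (Sum.inl (Sum.inr j)))) := tendsto_finset_sum _ fun j _ => hcoord _
  have ev1 : ∀ᶠ t in atTop, ∑ i, x t (Sum.inl (Sum.inl i)) < Ma :=
    hUa.eventually_lt_const (lt_add_one _)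
  have ev2 : ∀ᶠ t in atTop, ∑ j, x t (Sum.inl (Sum.inr j)) < Mb :=
    hUb.eventually_lt_const (lt_add_one _)
  have ev3 : ∀ᶠ t in atTop, x t (Sum.inr ()) < p (Sum.inr ()) + 1 :=
    (hcoord (Sum.inr ())).eventually_lt_const (lt_add_one _)
  obtain ⟨T, hT⟩ := Filter.eventually_atTop.mp ((ev1.and ev2).and ev3)
  -- basic bounds at times ≥ T
  have entA : ∀ t, T ≤ t → ∀ i k, PA t i k ≤ Ma := by
    intro t ht i k
    have h1 : PA t i k ≤ ∑ k', PA t i k' :=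
      Finset.single_le_sum (fun k' _ => hPA t i k') (Finset.mem_univ k)
    have h2 : ∑ k', PA t i k' = x t (Sum.inl (Sum.inl i)) := (hu t i).symm
    have h3 : x t (Sum.inl (Sum.inl i)) ≤ ∑ i', x t (Sum.inl (Sum.inl i')) := by
      refine Finset.single_le_sum (f := fun i' => x t (Sum.inl (Sum.inl i'))) (fun i' _ => ?_) (Finset.mem_univ i)
      show 0 ≤ x t (Sum.inl (Sum.inl i'))
      rw [hu t i']
      exact Finset.sum_nonneg fun k' _ => hPA t i' k'
    have h4 := ((hT t ht).1).1
    linarith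
  have entB : ∀ t, T ≤ t → ∀ k j, PB t k j ≤ Mb := by
    intro t ht k j
    have h1 : PB t k j ≤ ∑ k', PB t k' j :=
      Finset.single_le_sum (fun k' _ => hPB t k' j) (Finset.mem_univ k)
    have h2 : ∑ k', PB t k' j = x t (Sum.inl (Sum.inr j)) := (hv t j).symm
    have h3 : x t (Sum.inl (Sum.inr j)) ≤ ∑ j', x t (Sum.inl (Sum.inr j')) := by
      refine Finset.single_le_sum (f := fun j' => x t (Sum.inl (Sum.inr j'))) (fun j' _ => ?_) (Finset.mem_univ j)
      show 0 ≤ x t (Sum.inl (Sum.inr j'))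
      rw [hv t j']
      exact Finset.sum_nonneg fun k' _ => hPB t k' j'
    have h4 := ((hT t ht).1).2
    linarith
  have costbd : ∀ t, T ≤ t → -K ≤ dotM CA (PA t) + dotM CB (PB t) := by
    intro t ht
    have hA : -((∑ i, ∑ k, |CA i k|) * Ma) ≤ dotM CA (PA t) := by
      rw [neg_le]
      unfold dotM
      rw [Finset.sum_mul, ← Finset.sum_neg_distrib]
      refine Finset.sum_le_sum fun i _ => ?_
      rw [Finset.sum_mul, ← Finset.sum_neg_distrib]
      refine Finset.sum_le_sum fun k _ => ?_
      have h1 : |CA i k * PA t i k| ≤ |CA i k| * Ma := by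
        rw [abs_mul]
        exact mul_le_mul_of_nonneg_left
          (by rw [abs_of_nonneg (hPA t i k)]; exact entA t ht i k) (abs_nonneg _)
      have := neg_abs_le (CA i k * PA t i k)
      linarith
    have hB : -((∑ k, ∑ j, |CB k j|) * Mb) ≤ dotM CB (PB t) := by
      rw [neg_le]
      unfold dotM
      rw [Finset.sum_mul, ← Finset.sum_neg_distrib]
      refine Finset.sum_le_sum fun k _ => ?_
      rw [Finset.sum_mul, ← Finset.sum_neg_distrib]
      refine Finset.sum_le_sum fun j _ => ?_
      have h1 : |CB k j * PB t k j| ≤ |CB k j| * Mb := by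
        rw [abs_mul]
        exact mul_le_mul_of_nonneg_left
          (by rw [abs_of_nonneg (hPB t k j)]; exact entB t ht k j) (abs_nonneg _)
      have := neg_abs_le (CB k j * PB t k j)
      linarith
    rw [hKdef]
    linarith
  have sbd : ∀ t, T ≤ t → s t ≤ Ms := by
    intro t ht
    have h1 := hr t
    have h2 := (hT t ht).2
    have h3 := costbd t ht
    rw [hMsdef]
    linarith
  -- the compact box
  set X := (Fin m → Fin l → ℝ) × (Fin l → Fin n → ℝ) × ℝ with hXdef
  set box : Set X := (Set.univ.pi fun _ => Set.univ.pi fun _ => Set.Icc 0 Ma) ×ˢ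
      ((Set.univ.pi fun _ => Set.univ.pi fun _ => Set.Icc 0 Mb) ×ˢ Set.Icc 0 Ms) with hboxdef
  have hbox : IsCompact box :=
    ((isCompact_univ_pi fun _ => isCompact_univ_pi fun _ => isCompact_Icc).prod
      ((isCompact_univ_pi fun _ => isCompact_univ_pi fun _ => isCompact_Icc).prod
        isCompact_Icc))
  set q : ℕ → X := fun t => (fun i k => PA (t + T) i k, fun k j => PB (t + T) k j, s (t + T))
    with hqdef
  have hqmem : ∀ t, q t ∈ box := by
    intro t
    have ht : T ≤ t + T := Nat.le_add_left T t
    refine ⟨?_, ?_, ?_⟩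
    · intro i _
      intro k _
      exact ⟨hPA _ i k, entA _ ht i k⟩
    · intro k _
      intro j _
      exact ⟨hPB _ k j, entB _ ht k j⟩
    · exact ⟨hs _, sbd _ ht⟩
  obtain ⟨Q, hQmem, φ, hφ, hconv⟩ := hbox.tendsto_subseq hqmem
  have hφT : Tendsto (fun t => φ t + T) atTop atTop :=
    tendsto_atTop_mono (fun t => Nat.le_add_right (φ t) T) hφ.tendsto_atTop
  have hc1 : ∀ i k, Tendsto (fun t => PA (φ t + T) i k) atTop (𝓝 (Q.1 i k)) := by
    intro i k
    have hcont : Continuous fun z : X => z.1 i k := by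
      exact (continuous_apply k).comp ((continuous_apply i).comp continuous_fst)
    exact (hcont.tendsto Q).comp hconv
  have hc2 : ∀ k j, Tendsto (fun t => PB (φ t + T) k j) atTop (𝓝 (Q.2.1 k j)) := by
    intro k j
    have hcont : Continuous fun z : X => z.2.1 k j := by
      exact (continuous_apply j).comp ((continuous_apply k).comp (continuous_fst.comp continuous_snd))
    exact (hcont.tendsto Q).comp hconv
  have hc3 : Tendsto (fun t => s (φ t + T)) atTop (𝓝 Q.2.2) :=
    ((continuous_snd.comp continuous_snd).tendsto Q).comp hconv
  refine ⟨Matrix.of Q.1, Matrix.of Q.2.1, Q.2.2, ?_, ?_, ?_, ?_, ?_, ?_, ?_⟩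
  · intro i k
    exact (hQmem.1 i (Set.mem_univ i) k (Set.mem_univ k)).1
  · intro k j
    exact (hQmem.2.1 k (Set.mem_univ k) j (Set.mem_univ j)).1
  · exact hQmem.2.2.1
  · intro i
    refine tendsto_nhds_unique ((hcoord (Sum.inl (Sum.inl i))).comp hφT) ?_
    have : ∀ t, x (φ t + T) (Sum.inl (Sum.inl i)) = ∑ k, PA (φ t + T) i k := fun t => hu _ i
    simp only [Function.comp_def, this]
    exact tendsto_finset_sum _ fun k _ => hc1 i k
  · intro j
    refine tendsto_nhds_unique ((hcoord (Sum.inl (Sum.inr j))).comp hφT) ?_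
    have : ∀ t, x (φ t + T) (Sum.inl (Sum.inr j)) = ∑ k, PB (φ t + T) k j := fun t => hv _ j
    simp only [Function.comp_def, this]
    exact tendsto_finset_sum _ fun k _ => hc2 k j
  · intro k
    refine tendsto_nhds_unique (tendsto_finset_sum _ fun i _ => hc1 i k) ?_
    have : ∀ t, ∑ i, PA (φ t + T) i k = ∑ j, PB (φ t + T) k j := fun t => hMd _ k
    simp only [this]
    exact tendsto_finset_sum _ fun j _ => hc2 k j
  · refine tendsto_nhds_unique ((hcoord (Sum.inr ())).comp hφT) ?_
    have : ∀ t, x (φ t + T) (Sum.inr ()) =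
        dotM CA (PA (φ t + T)) + dotM CB (PB (φ t + T)) + s (φ t + T) := fun t => hr _
    simp only [Function.comp_def, this]
    unfold dotM
    exact Tendsto.add (Tendsto.add
      (tendsto_finset_sum _ fun i _ => tendsto_finset_sum _ fun k _ =>
        (tendsto_const_nhds.mul (hc1 i k)))
      (tendsto_finset_sum _ fun k _ => tendsto_finset_sum _ fun j _ =>
        (tendsto_const_nhds.mul (hc2 k j)))) hc3

end SeqOTAux

namespace SeqOTAux

open Filter Topology

noncomputable def enc {m n : ℕ} (u : Fin m → ℝ) (v : Fin n → ℝ) (r : ℝ) :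
    EuclideanSpace ℝ ((Fin m ⊕ Fin n) ⊕ Unit) :=
  (WithLp.equiv 2 _).symm (Sum.elim (Sum.elim u v) fun _ => r)

@[simp] lemma enc_apply_a {m n : ℕ} (u : Fin m → ℝ) (v : Fin n → ℝ) (r : ℝ) (i : Fin m) :
    enc u v r (Sum.inl (Sum.inl i)) = u i := rfl
@[simp] lemma enc_apply_b {m n : ℕ} (u : Fin m → ℝ) (v : Fin n → ℝ) (r : ℝ) (j : Fin n) :
    enc u v r (Sum.inl (Sum.inr j)) = v j := rfl
@[simp] lemma enc_apply_r {m n : ℕ} (u : Fin m → ℝ) (v : Fin n → ℝ) (r : ℝ) :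
    enc u v r (Sum.inr ()) = r := rfl

open scoped InnerProductSpace in
lemma inner_split {m n : ℕ} (x y : EuclideanSpace ℝ ((Fin m ⊕ Fin n) ⊕ Unit)) :
    ⟪x, y⟫_ℝ = ∑ i, x (Sum.inl (Sum.inl i)) * y (Sum.inl (Sum.inl i))
      + ∑ j, x (Sum.inl (Sum.inr j)) * y (Sum.inl (Sum.inr j))
      + x (Sum.inr ()) * y (Sum.inr ()) := by
  simp [PiLp.inner_apply, RCLike.inner_apply, Fintype.sum_sum_type, mul_comm]

end SeqOTAux

namespace SeqOTAux

open Filter Topology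
open scoped InnerProductSpace

variable {m l n : ℕ}

lemma coneSet_smul (CA : Matrix (Fin m) (Fin l) ℝ) (CB : Matrix (Fin l) (Fin n) ℝ)
    {c : ℝ} (hc : 0 < c) {x : EuclideanSpace ℝ ((Fin m ⊕ Fin n) ⊕ Unit)}
    (hx : x ∈ coneSet CA CB) : c • x ∈ coneSet CA CB := by
  obtain ⟨PA, PB, s, hPA, hPB, hs, hu, hv, hMd, hr⟩ := hx
  refine ⟨Matrix.of fun i k => c * PA i k, Matrix.of fun k j => c * PB k j, c * s,
    fun i k => mul_nonneg hc.le (hPA i k), fun k j => mul_nonneg hc.le (hPB k j),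
    mul_nonneg hc.le hs, ?_, ?_, ?_, ?_⟩
  · intro i
    show c * x (Sum.inl (Sum.inl i)) = _
    rw [hu i, Finset.mul_sum]
    rfl
  · intro j
    show c * x (Sum.inl (Sum.inr j)) = _
    rw [hv j, Finset.mul_sum]
    rfl
  · intro k
    show ∑ i, c * PA i k = ∑ j, c * PB k j
    rw [← Finset.mul_sum, ← Finset.mul_sum, hMd k]
  · show c * x (Sum.inr ()) = _
    have e1 : dotM CA (Matrix.of fun i k => c * PA i k) = c * dotM CA PA := by
      unfold dotM
      rw [Finset.mul_sum]
      refine Finset.sum_congr rfl fun i _ => ?_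
      rw [Finset.mul_sum]
      refine Finset.sum_congr rfl fun k _ => ?_
      show CA i k * (c * PA i k) = _
      ring
    have e2 : dotM CB (Matrix.of fun k j => c * PB k j) = c * dotM CB PB := by
      unfold dotM
      rw [Finset.mul_sum]
      refine Finset.sum_congr rfl fun k _ => ?_
      rw [Finset.mul_sum]
      refine Finset.sum_congr rfl fun j _ => ?_
      show CB k j * (c * PB k j) = _
      ring
    rw [hr, e1, e2]
    ring

lemma coneSet_add (CA : Matrix (Fin m) (Fin l) ℝ) (CB : Matrix (Fin l) (Fin n) ℝ)
    {x y : EuclideanSpace ℝ ((Fin m ⊕ Fin n) ⊕ Unit)}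
    (hx : x ∈ coneSet CA CB) (hy : y ∈ coneSet CA CB) : x + y ∈ coneSet CA CB := by
  obtain ⟨PA, PB, s, hPA, hPB, hs, hu, hv, hMd, hr⟩ := hx
  obtain ⟨QA, QB, t, hQA, hQB, ht, hu', hv', hMd', hr'⟩ := hy
  refine ⟨Matrix.of fun i k => PA i k + QA i k, Matrix.of fun k j => PB k j + QB k j, s + t,
    fun i k => add_nonneg (hPA i k) (hQA i k), fun k j => add_nonneg (hPB k j) (hQB k j),
    add_nonneg hs ht, ?_, ?_, ?_, ?_⟩
  · intro i
    show x (Sum.inl (Sum.inl i)) + y (Sum.inl (Sum.inl i)) = _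
    rw [hu i, hu' i, ← Finset.sum_add_distrib]
    rfl
  · intro j
    show x (Sum.inl (Sum.inr j)) + y (Sum.inl (Sum.inr j)) = _
    rw [hv j, hv' j, ← Finset.sum_add_distrib]
    rfl
  · intro k
    show ∑ i, (PA i k + QA i k) = ∑ j, (PB k j + QB k j)
    rw [Finset.sum_add_distrib, Finset.sum_add_distrib, hMd k, hMd' k]
  · show x (Sum.inr ()) + y (Sum.inr ()) = _
    rw [hr, hr']
    unfold dotM
    simp only [Matrix.of_apply, mul_add, Finset.sum_add_distrib]
    ring

end SeqOTAux

open Filter Topology SeqOTAux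
open scoped InnerProductSpace

set_option maxHeartbeats 1600000 in
theorem seqOT_strong_duality {m l n : ℕ} (hm : 1 ≤ m) (hn : 1 ≤ n) (hl : 1 ≤ l)
    (CA : Matrix (Fin m) (Fin l) ℝ) (CB : Matrix (Fin l) (Fin n) ℝ)
    (a : Fin m → ℝ) (b : Fin n → ℝ)
    (ha : (∀ i, 0 ≤ a i) ∧ ∑ i, a i = 1) (hb : (∀ j, 0 ≤ b j) ∧ ∑ j, b j = 1) :
    sInf {v : ℝ | ∃ (PA : Matrix (Fin m) (Fin l) ℝ) (PB : Matrix (Fin l) (Fin n) ℝ),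
        (∀ i k, 0 ≤ PA i k) ∧ (∀ k j, 0 ≤ PB k j) ∧
        (∀ i, ∑ k, PA i k = a i) ∧ (∀ j, ∑ k, PB k j = b j) ∧
        (∀ k, ∑ i, PA i k = ∑ j, PB k j) ∧
        v = dotM CA PA + dotM CB PB}
    = sSup {v : ℝ | ∃ (f : Fin m → ℝ) (g : Fin n → ℝ),
        (∀ (i : Fin m) (k : Fin l) (j : Fin n), f i + g j ≤ CA i k + CB k j) ∧
        v = ∑ i, f i * a i + ∑ j, g j * b j} := by
  set P : Set ℝ := {v : ℝ | ∃ (PA : Matrix (Fin m) (Fin l) ℝ) (PB : Matrix (Fin l) (Fin n) ℝ),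
        (∀ i k, 0 ≤ PA i k) ∧ (∀ k j, 0 ≤ PB k j) ∧
        (∀ i, ∑ k, PA i k = a i) ∧ (∀ j, ∑ k, PB k j = b j) ∧
        (∀ k, ∑ i, PA i k = ∑ j, PB k j) ∧
        v = dotM CA PA + dotM CB PB} with hPdef
  set D : Set ℝ := {v : ℝ | ∃ (f : Fin m → ℝ) (g : Fin n → ℝ),
        (∀ (i : Fin m) (k : Fin l) (j : Fin n), f i + g j ≤ CA i k + CB k j) ∧
        v = ∑ i, f i * a i + ∑ j, g j * b j} with hDdef
  -- weak duality
  have wd : ∀ d ∈ D, ∀ p ∈ P, d ≤ p := by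
    rintro d ⟨f, g, hfg, rfl⟩ p ⟨PA, PB, hPA, hPB, hA, hB, hM, rfl⟩
    have := weak_duality CA CB PA PB hPA hPB hM f g hfg
    simp only [hA, hB] at this
    exact this
  -- primal feasible point
  set k0 : Fin l := ⟨0, hl⟩ with hk0
  set PA0 : Matrix (Fin m) (Fin l) ℝ := Matrix.of fun i k => if k = k0 then a i else 0 with hPA0
  set PB0 : Matrix (Fin l) (Fin n) ℝ := Matrix.of fun k j => if k = k0 then b j else 0 with hPB0
  have hP0 : dotM CA PA0 + dotM CB PB0 ∈ P := by
    refine ⟨PA0, PB0, ?_, ?_, ?_, ?_, ?_, rfl⟩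
    · intro i k
      show (0:ℝ) ≤ if k = k0 then a i else 0
      split <;> simp [ha.1 i]
    · intro k j
      show (0:ℝ) ≤ if k = k0 then b j else 0
      split <;> simp [hb.1 j]
    · intro i
      show (∑ k, if k = k0 then a i else 0) = a i
      simp
    · intro j
      show (∑ k, if k = k0 then b j else 0) = b j
      simp
    · intro k
      show (∑ i, if k = k0 then a i else 0) = ∑ j, if k = k0 then b j else 0
      by_cases hk : k = k0 <;> simp [hk, ha.2, hb.2]
  have hPne : P.Nonempty := ⟨_, hP0⟩
  -- dual feasible point
  have hln : Nonempty (Fin l × Fin n) := ⟨(⟨0, hl⟩, ⟨0, hn⟩)⟩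
  have hD0 : (∑ i, (Finset.univ.inf' Finset.univ_nonempty
      fun p : Fin l × Fin n => CA i p.1 + CB p.1 p.2) * a i + ∑ j, (0:ℝ) * b j) ∈ D := by
    refine ⟨_, fun _ => (0:ℝ), fun i k j => ?_, rfl⟩
    rw [add_zero]
    exact Finset.inf'_le _ (Finset.mem_univ (k, j))
  have hDne : D.Nonempty := ⟨_, hD0⟩
  have hPbdd : BddBelow P := ⟨_, fun p hp => wd _ hD0 p hp⟩
  have hDbdd : BddAbove D := ⟨_, fun d hd => wd d hd _ hP0⟩
  refine le_antisymm ?_ (csSup_le hDne fun d hd => le_csInf hPne fun p hp => wd d hd p hp)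
  -- strong direction
  refine le_of_forall_pos_le_add ?_
  intro ε hε
  -- the point to separate
  set z : EuclideanSpace ℝ ((Fin m ⊕ Fin n) ⊕ Unit) := enc a b (sInf P - ε) with hz
  have hznotin : z ∉ coneSet CA CB := by
    rintro ⟨PA, PB, s, hPA, hPB, hs, hu, hv, hMd, hr⟩
    simp only [hz, enc_apply_a, enc_apply_b, enc_apply_r] at hu hv hr
    have hmem : dotM CA PA + dotM CB PB ∈ P :=
      ⟨PA, PB, hPA, hPB, fun i => (hu i).symm, fun j => (hv j).symm, hMd, rfl⟩
    have h1 : sInf P ≤ dotM CA PA + dotM CB PB := csInf_le hPbdd hmem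
    linarith
  -- the cone
  set K : ConvexCone ℝ (EuclideanSpace ℝ ((Fin m ⊕ Fin n) ⊕ Unit)) :=
    { carrier := coneSet CA CB
      smul_mem' := fun _ hc _ hx => coneSet_smul CA CB hc hx
      add_mem' := fun _ hx _ hy => coneSet_add CA CB hx hy } with hK
  have hKne : (K : Set (EuclideanSpace ℝ ((Fin m ⊕ Fin n) ⊕ Unit))).Nonempty := by
    refine ⟨enc (fun _ => 0) (fun _ => 0) 0, 0, 0, 0, ?_, ?_, le_refl 0, ?_, ?_, ?_, ?_⟩ <;>
      simp [dotM, Matrix.zero_apply]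
  have hKcl : IsClosed (K : Set (EuclideanSpace ℝ ((Fin m ⊕ Fin n) ⊕ Unit))) :=
    coneSet_isClosed CA CB
  have h0 : (0 : EuclideanSpace ℝ ((Fin m ⊕ Fin n) ⊕ Unit)) ∈ coneSet CA CB := by
    refine ⟨0, 0, 0, ?_, ?_, le_refl 0, ?_, ?_, ?_, ?_⟩ <;>
      simp [dotM, Matrix.zero_apply]
  obtain ⟨y, hy1, hy2⟩ :=
    ProperCone.hyperplane_separation' (C := ({
        carrier := coneSet CA CB
        add_mem' := fun hx hy => coneSet_add CA CB hx hy
        zero_mem' := h0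
        smul_mem' := fun c x hx => by
          by_cases hc : c = 0
          · subst hc; rw [zero_smul]; exact h0
          · exact coneSet_smul CA CB (NNReal.coe_pos.mpr (pos_iff_ne_zero.mpr hc)) hx
        isClosed' := hKcl } : ProperCone ℝ (EuclideanSpace ℝ ((Fin m ⊕ Fin n) ⊕ Unit)))) hznotin
  set f' : Fin m → ℝ := fun i => y (Sum.inl (Sum.inl i)) with hf'
  set g' : Fin n → ℝ := fun j => y (Sum.inl (Sum.inr j)) with hg'
  set β : ℝ := y (Sum.inr ()) with hβ
  have hsep : ∑ i, a i * f' i + ∑ j, b j * g' j + (sInf P - ε) * β < 0 := by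
    have := hy2
    rw [real_inner_comm, inner_split] at this
    simpa [hz, hf', hg', hβ, mul_comm] using this
  have hcone_ineq : ∀ (u : Fin m → ℝ) (v : Fin n → ℝ) (r : ℝ),
      enc u v r ∈ coneSet CA CB →
      0 ≤ ∑ i, u i * f' i + ∑ j, v j * g' j + r * β := by
    intro u v r hmem
    have := hy1 _ hmem
    rw [inner_split] at this
    simpa using this
  have hβ0 : 0 ≤ β := by
    have hmem : enc (fun _ => (0:ℝ)) (fun _ => (0:ℝ)) 1 ∈ coneSet CA CB := by
      refine ⟨0, 0, 1, ?_, ?_, zero_le_one, ?_, ?_, ?_, ?_⟩ <;>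
        simp [dotM, Matrix.zero_apply]
    have := hcone_ineq _ _ _ hmem
    simpa using this
  rcases eq_or_lt_of_le hβ0 with hβz | hβpos
  · -- β = 0 : contradiction using the primal feasible point
    exfalso
    have hmem : enc a b (dotM CA PA0 + dotM CB PB0) ∈ coneSet CA CB := by
      refine ⟨PA0, PB0, 0, ?_, ?_, le_refl 0, ?_, ?_, ?_, ?_⟩
      · intro i k
        show (0:ℝ) ≤ if k = k0 then a i else 0
        split <;> simp [ha.1 i]
      · intro k j
        show (0:ℝ) ≤ if k = k0 then b j else 0
        split <;> simp [hb.1 j]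
      · intro i
        show a i = ∑ k, if k = k0 then a i else 0
        simp
      · intro j
        show b j = ∑ k, if k = k0 then b j else 0
        simp
      · intro k
        show (∑ i, if k = k0 then a i else 0) = ∑ j, if k = k0 then b j else 0
        by_cases hk : k = k0 <;> simp [hk, ha.2, hb.2]
      · show dotM CA PA0 + dotM CB PB0 = dotM CA PA0 + dotM CB PB0 + 0
        ring
    have h1 := hcone_ineq _ _ _ hmem
    rw [← hβz] at h1 hsep
    simp only [mul_zero, add_zero] at h1 hsep
    linarith
  · -- β > 0 : build the dual solution
    set f : Fin m → ℝ := fun i => -f' i / β with hf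
    set g : Fin n → ℝ := fun j => -g' j / β with hg
    have hfeas : ∀ (i : Fin m) (k : Fin l) (j : Fin n), f i + g j ≤ CA i k + CB k j := by
      intro i k j
      have hmem : enc (fun i' => if i' = i then (1:ℝ) else 0)
          (fun j' => if j' = j then (1:ℝ) else 0) (CA i k + CB k j) ∈ coneSet CA CB := by
        refine ⟨Matrix.of fun i' k' => if i' = i ∧ k' = k then (1:ℝ) else 0,
          Matrix.of fun k' j' => if k' = k ∧ j' = j then (1:ℝ) else 0, 0,
          ?_, ?_, le_refl 0, ?_, ?_, ?_, ?_⟩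
        · intro i' k'
          show (0:ℝ) ≤ if i' = i ∧ k' = k then (1:ℝ) else 0
          split <;> norm_num
        · intro k' j'
          show (0:ℝ) ≤ if k' = k ∧ j' = j then (1:ℝ) else 0
          split <;> norm_num
        · intro i'
          show (if i' = i then (1:ℝ) else 0) = ∑ k', if i' = i ∧ k' = k then (1:ℝ) else 0
          by_cases hi : i' = i <;> simp [hi]
        · intro j'
          show (if j' = j then (1:ℝ) else 0) = ∑ k', if k' = k ∧ j' = j then (1:ℝ) else 0
          by_cases hj : j' = j <;> simp [hj]
        · intro k'
          show (∑ i', if i' = i ∧ k' = k then (1:ℝ) else 0)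
              = ∑ j', if k' = k ∧ j' = j then (1:ℝ) else 0
          by_cases hk : k' = k <;> simp [hk]
        · show CA i k + CB k j = dotM CA _ + dotM CB _ + 0
          have e1 : dotM CA (Matrix.of fun i' k' => if i' = i ∧ k' = k then (1:ℝ) else 0)
              = CA i k := by
            unfold dotM
            rw [Finset.sum_eq_single i, Finset.sum_eq_single k]
            · simp
            · intro k' _ hk'
              show CA i k' * (if i = i ∧ k' = k then (1:ℝ) else 0) = 0
              simp [hk']
            · intro h; exact absurd (Finset.mem_univ k) h
            · intro i' _ hi'
              refine Finset.sum_eq_zero fun k' _ => ?_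
              show CA i' k' * (if i' = i ∧ k' = k then (1:ℝ) else 0) = 0
              simp [hi']
            · intro h; exact absurd (Finset.mem_univ i) h
          have e2 : dotM CB (Matrix.of fun k' j' => if k' = k ∧ j' = j then (1:ℝ) else 0)
              = CB k j := by
            unfold dotM
            rw [Finset.sum_eq_single k, Finset.sum_eq_single j]
            · simp
            · intro j' _ hj'
              show CB k j' * (if k = k ∧ j' = j then (1:ℝ) else 0) = 0
              simp [hj']
            · intro h; exact absurd (Finset.mem_univ j) h
            · intro k' _ hk'
              refine Finset.sum_eq_zero fun j' _ => ?_
              show CB k' j' * (if k' = k ∧ j' = j then (1:ℝ) else 0) = 0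
              simp [hk']
            · intro h; exact absurd (Finset.mem_univ k) h
          rw [e1, e2, add_zero]
      have h1 := hcone_ineq _ _ _ hmem
      simp only [Finset.sum_ite_eq', Finset.mem_univ, if_true, ite_mul, one_mul,
        zero_mul] at h1
      -- h1 : 0 ≤ f' i + g' j + (CA i k + CB k j) * β
      rw [hf, hg]
      rw [← add_div, div_le_iff₀ hβpos]
      nlinarith [h1]
    have hval : (∑ i, f i * a i + ∑ j, g j * b j) ∈ D := ⟨f, g, hfeas, rfl⟩
    have hgt : sInf P - ε ≤ ∑ i, f i * a i + ∑ j, g j * b j := by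
      have e1 : ∑ i, f i * a i = -(∑ i, a i * f' i) / β := by
        rw [← Finset.sum_neg_distrib, Finset.sum_div]
        refine Finset.sum_congr rfl fun i _ => ?_
        show -f' i / β * a i = -(a i * f' i) / β
        ring
      have e2 : ∑ j, g j * b j = -(∑ j, b j * g' j) / β := by
        rw [← Finset.sum_neg_distrib, Finset.sum_div]
        refine Finset.sum_congr rfl fun j _ => ?_
        show -g' j / β * b j = -(b j * g' j) / β
        ring
      rw [e1, e2, ← add_div, le_div_iff₀ hβpos]
      nlinarith [hsep]
    have : sInf P - ε ≤ sSup D := le_trans hgt (le_csSup hDbdd hval)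
    linarith
end

section
/- Strong duality for the parallelly composed OT: assuming Σ_{i=1}^m a_i = Σ_{j=1}^n b_j, the minimum of ⟨C^A, P^A⟩ + ⟨C^B, P^B⟩ over feasible plans equals the supremum of Σ_{i=1}^{m+k} f_i a_i + Σ_{j=1}^{n+l} g_j b_j over f ∈ ℝ^(m+k), g ∈ ℝ^(n+l) satisfying f_i + g_j ≤ C^A_{ij} for i ∈ [m], j ∈ [n] and f_{m+i} + g_{n+j} ≤ C^B_{ij} for i ∈ [k], j ∈ [l]. -/
open BigOperators

section Cone
variable {ι : Type*} [Fintype ι] {E : Type*} [NormedAddCommGroup E]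
  [InnerProductSpace ℝ E] [FiniteDimensional ℝ E]

set_option linter.unusedSectionVars false

/-- Conic Carathéodory: any nonnegative combination can be rewritten with
linearly independent support. -/
lemma cone_caratheodory_aux (g : ι → E) :
    ∀ (N : ℕ) (lam : ι → ℝ), (∀ i, 0 ≤ lam i) →
      (Finset.univ.filter fun i => lam i ≠ 0).card ≤ N →
      ∃ mu : ι → ℝ, (∀ i, 0 ≤ mu i) ∧
        LinearIndependent ℝ (fun i : {i // mu i ≠ 0} => g i.1) ∧
        ∑ i, mu i • g i = ∑ i, lam i • g i := by
  classical
  intro N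
  induction N with
  | zero =>
    intro lam hlam hcard
    have hall : ∀ i, lam i = 0 := by
      intro i
      by_contra h
      have : i ∈ Finset.univ.filter fun i => lam i ≠ 0 := by simp [h]
      have := Finset.card_pos.mpr ⟨i, this⟩
      omega
    refine ⟨lam, hlam, ?_, rfl⟩
    have : IsEmpty {i // lam i ≠ 0} := ⟨fun x => x.2 (hall x.1)⟩
    exact linearIndependent_empty_type
  | succ N ih =>
    intro lam hlam hcard
    by_cases hind : LinearIndependent ℝ (fun i : {i // lam i ≠ 0} => g i.1)
    · exact ⟨lam, hlam, hind, rfl⟩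
    · obtain ⟨cs, hcs0, i₁, hci₁⟩ := Fintype.not_linearIndependent_iff.mp hind
      -- make sure some coefficient is positive
      obtain ⟨c, hc0, i₂, hci₂⟩ :
          ∃ c : {i // lam i ≠ 0} → ℝ, (∑ i, c i • g i.1 = 0) ∧ ∃ i, 0 < c i := by
        rcases lt_or_gt_of_ne hci₁ with h | h
        · exact ⟨-cs, by simp [hcs0], i₁, by simpa using h⟩
        · exact ⟨cs, hcs0, i₁, h⟩
      set cbar : ι → ℝ := fun i => if h : lam i ≠ 0 then c ⟨i, h⟩ else 0 with hcbar
      have hcbar_sum : ∑ i, cbar i • g i = 0 := by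
        rw [← Finset.sum_filter_of_ne (p := fun i => lam i ≠ 0)
          (by intro i _ h; by_contra hl; simp [hcbar, hl] at h)]
        rw [Finset.sum_subtype (p := fun i => lam i ≠ 0) _ (by simp)
          (fun i => cbar i • g i)]
        rw [← hc0]
        exact Finset.sum_congr rfl (fun i _ => by simp [hcbar, i.2])
      -- the set of indices with positive cbar
      have hS : (Finset.univ.filter fun i => 0 < cbar i).Nonempty := by
        refine ⟨i₂.1, ?_⟩
        simp only [Finset.mem_filter, Finset.mem_univ, true_and, hcbar]
        rw [dif_pos i₂.2]
        simpa using hci₂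
      obtain ⟨i₀, hi₀mem, hi₀min⟩ :=
        Finset.exists_min_image _ (fun i => lam i / cbar i) hS
      simp only [Finset.mem_filter, Finset.mem_univ, true_and] at hi₀mem
      have hlam₀ : lam i₀ ≠ 0 := by
        intro h
        have : cbar i₀ = 0 := by simp [hcbar, h]
        rw [this] at hi₀mem; exact lt_irrefl _ hi₀mem
      set t : ℝ := lam i₀ / cbar i₀ with ht
      have ht0 : 0 ≤ t := div_nonneg (hlam i₀) hi₀mem.le
      set lam' : ι → ℝ := fun i => lam i - t * cbar i with hlam'
      have hlam'0 : ∀ i, 0 ≤ lam' i := by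
        intro i
        rcases le_or_gt (cbar i) 0 with h | h
        · have : t * cbar i ≤ 0 := mul_nonpos_of_nonneg_of_nonpos ht0 h
          simp only [hlam']; linarith [hlam i]
        · have := hi₀min i (by simp [h])
          have : t * cbar i ≤ lam i := by
            rw [ht]
            calc lam i₀ / cbar i₀ * cbar i ≤ lam i / cbar i * cbar i := by
                  apply mul_le_mul_of_nonneg_right this h.le
              _ = lam i := by field_simp
          simp only [hlam']; linarith
      have hsum' : ∑ i, lam' i • g i = ∑ i, lam i • g i := by
        simp only [hlam', sub_smul, Finset.sum_sub_distrib, mul_smul]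
        rw [← Finset.smul_sum, hcbar_sum, smul_zero, sub_zero]
      have hsupp : (Finset.univ.filter fun i => lam' i ≠ 0) ⊆
          (Finset.univ.filter fun i => lam i ≠ 0).erase i₀ := by
        intro i hi
        simp only [Finset.mem_filter, Finset.mem_univ, true_and] at hi
        rw [Finset.mem_erase]
        constructor
        · rintro rfl
          apply hi
          simp only [hlam', ht]
          field_simp
          ring
        · simp only [Finset.mem_filter, Finset.mem_univ, true_and]
          intro h
          apply hi
          simp [hlam', hcbar, h]
      have hmem₀ : i₀ ∈ Finset.univ.filter fun i => lam i ≠ 0 := by simp [hlam₀]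
      have hcard' : (Finset.univ.filter fun i => lam' i ≠ 0).card ≤ N := by
        have := Finset.card_le_card hsupp
        rw [Finset.card_erase_of_mem hmem₀] at this
        omega
      obtain ⟨mu, h1, h2, h3⟩ := ih lam' hlam'0 hcard'
      exact ⟨mu, h1, h2, h3.trans hsum'⟩

/-- A finitely generated cone is closed. -/
lemma isClosed_fg_cone (g : ι → E) :
    IsClosed {x : E | ∃ lam : ι → ℝ, (∀ i, 0 ≤ lam i) ∧ x = ∑ i, lam i • g i} := by
  classical
  -- each piece: image of the nonneg orthant under the combination map of an independent family
  have piece : ∀ T : Finset ι,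
      IsClosed (if LinearIndependent ℝ (fun i : T => g i.1) then
        (fun mu : T → ℝ => ∑ i : T, mu i • g i.1) '' {mu | ∀ i, 0 ≤ mu i} else ∅) := by
    intro T
    split_ifs with hT
    · set L : (T → ℝ) →ₗ[ℝ] E :=
        { toFun := fun mu => ∑ i : T, mu i • g i.1
          map_add' := by intro x y; simp [add_smul, Finset.sum_add_distrib]
          map_smul' := by intro r x; simp [mul_smul, Finset.smul_sum] } with hL
      have hker : LinearMap.ker L = ⊥ := by
        rw [LinearMap.ker_eq_bot']
        intro mu hmu
        funext i
        exact Fintype.linearIndependent_iff.mp hT mu hmu i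
      have hemb := LinearMap.isClosedEmbedding_of_injective hker
      have horth : IsClosed {mu : T → ℝ | ∀ i, 0 ≤ mu i} := by
        have : {mu : T → ℝ | ∀ i, 0 ≤ mu i} = ⋂ i, {mu : T → ℝ | 0 ≤ mu i} := by
          ext mu; simp [Set.mem_iInter]
        rw [this]
        exact isClosed_iInter fun i => isClosed_le continuous_const (continuous_apply i)
      exact hemb.isClosedMap _ horth
    · exact isClosed_empty
  have : {x : E | ∃ lam : ι → ℝ, (∀ i, 0 ≤ lam i) ∧ x = ∑ i, lam i • g i} =
      ⋃ T : Finset ι, (if LinearIndependent ℝ (fun i : T => g i.1) then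
        (fun mu : T → ℝ => ∑ i : T, mu i • g i.1) '' {mu | ∀ i, 0 ≤ mu i} else ∅) := by
    ext x
    simp only [Set.mem_setOf_eq, Set.mem_iUnion]
    constructor
    · rintro ⟨lam, hlam, rfl⟩
      obtain ⟨mu, hmu0, hmuind, hmusum⟩ :=
        cone_caratheodory_aux g (Finset.univ.filter fun i => lam i ≠ 0).card lam hlam le_rfl
      refine ⟨Finset.univ.filter fun i => mu i ≠ 0, ?_⟩
      have hindT : LinearIndependent ℝ
          (fun i : (Finset.univ.filter fun i => mu i ≠ 0 : Finset ι) => g i.1) := by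
        have hfun : (fun i : (Finset.univ.filter fun i => mu i ≠ 0 : Finset ι) => g i.1)
            = (fun i : {i // mu i ≠ 0} => g i.1) ∘
              (Equiv.subtypeEquivRight (q := fun i => mu i ≠ 0) (by simp)) :=
          funext fun i => rfl
        rw [hfun]
        exact hmuind.comp _ (Equiv.injective _)
      rw [if_pos hindT]
      refine ⟨fun i => mu i.1, fun i => hmu0 i.1, ?_⟩
      rw [← hmusum]
      rw [← Finset.sum_filter_of_ne (p := fun i => mu i ≠ 0)
        (by intro i _ h; by_contra hl; simp [hl] at h)]
      exact Finset.sum_coe_sort _ (fun i => mu i • g i)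
    · rintro ⟨T, hx⟩
      split_ifs at hx with hT
      · obtain ⟨mu, hmu, rfl⟩ := hx
        refine ⟨fun i => if h : i ∈ T then mu ⟨i, h⟩ else 0, ?_, ?_⟩
        · intro i
          by_cases h : i ∈ T
          · simpa [h] using hmu ⟨i, h⟩
          · simp [h]
        · dsimp only
          rw [← Finset.sum_subset (Finset.subset_univ T) (by intro i _ hi; simp [hi])]
          rw [← Finset.sum_coe_sort T (fun i => (if h : i ∈ T then mu ⟨i, h⟩ else 0) • g i)]
          apply Finset.sum_congr rfl
          intro i _
          simp [i.2]
      · exact absurd hx (Set.notMem_empty x)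
  rw [this]
  exact isClosed_iUnion_of_finite piece

end Cone


section LPhelp
variable {κ : Type*} [Fintype κ]

lemma euclid_sum_apply {α : Type*} (s : Finset α) (F : α → EuclideanSpace ℝ κ) (z : κ) :
    (∑ u ∈ s, F u) z = ∑ u ∈ s, F u z := by
  classical
  induction s using Finset.induction with
  | empty => rfl
  | insert _ _ h ih => rw [Finset.sum_insert h, Finset.sum_insert h, ← ih]; rfl

lemma euclid_smul_apply (r : ℝ) (x : EuclideanSpace ℝ κ) (z : κ) : (r • x) z = r * x z := rfl

lemma euclid_inner (x y : EuclideanSpace ℝ κ) : (inner ℝ x y : ℝ) = ∑ z, x z * y z := by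
  rw [PiLp.inner_apply]
  simp [RCLike.inner_apply, conj_trivial]
  exact Finset.sum_congr rfl fun _ _ => mul_comm _ _

end LPhelp

section LP
variable {ι κ : Type*} [Fintype ι] [Fintype κ]

lemma lp_strong_duality (A : ι → κ → ℝ) (c : ι → ℝ) (d : κ → ℝ)
    (hP : ∃ x : ι → ℝ, (∀ i, 0 ≤ x i) ∧ ∀ j, ∑ i, x i * A i j = d j)
    (hD : ∃ y : κ → ℝ, ∀ i, ∑ j, A i j * y j ≤ c i) :
    sInf {v | ∃ x : ι → ℝ, (∀ i, 0 ≤ x i) ∧ (∀ j, ∑ i, x i * A i j = d j) ∧ v = ∑ i, x i * c i}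
      = sSup {v | ∃ y : κ → ℝ, (∀ i, ∑ j, A i j * y j ≤ c i) ∧ v = ∑ j, d j * y j} := by
  classical
  set P := {v | ∃ x : ι → ℝ, (∀ i, 0 ≤ x i) ∧ (∀ j, ∑ i, x i * A i j = d j) ∧ v = ∑ i, x i * c i}
    with hPdef
  set D := {v | ∃ y : κ → ℝ, (∀ i, ∑ j, A i j * y j ≤ c i) ∧ v = ∑ j, d j * y j} with hDdef
  obtain ⟨x₀, hx₀0, hx₀⟩ := hP
  obtain ⟨y₀, hy₀⟩ := hD
  have hPne : P.Nonempty := ⟨_, x₀, hx₀0, hx₀, rfl⟩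
  have hDne : D.Nonempty := ⟨_, y₀, hy₀, rfl⟩
  have weak : ∀ vp ∈ P, ∀ vq ∈ D, vq ≤ vp := by
    rintro vp ⟨x, hx0, hxc, rfl⟩ vq ⟨y, hyc, rfl⟩
    have h1 : ∑ j, d j * y j = ∑ i, x i * ∑ j, A i j * y j := by
      calc ∑ j, d j * y j = ∑ j, (∑ i, x i * A i j) * y j := by
            exact Finset.sum_congr rfl fun j _ => by rw [hxc j]
        _ = ∑ i, x i * ∑ j, A i j * y j := by
            simp only [Finset.sum_mul, Finset.mul_sum, mul_assoc]
            exact Finset.sum_comm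
    rw [h1]
    exact Finset.sum_le_sum fun i _ => mul_le_mul_of_nonneg_left (hyc i) (hx0 i)
  have hbddP : BddBelow P := ⟨∑ j, d j * y₀ j, fun vp hvp => weak vp hvp _ ⟨y₀, hy₀, rfl⟩⟩
  have hbddD : BddAbove D := by
    refine ⟨∑ i, x₀ i * c i, fun vq hvq => weak _ ⟨x₀, hx₀0, hx₀, rfl⟩ vq hvq⟩
  set vstar := sInf P with hvstar
  have hDle : ∀ vq ∈ D, vq ≤ vstar := fun vq hq => le_csInf hPne fun vp hp => weak vp hp vq hq
  -- key: approximate dual optimality via Farkas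
  have key : ∀ ε : ℝ, 0 < ε → vstar - ε ≤ sSup D := by
    intro ε hε
    set Gfun : (ι ⊕ Unit) → (κ ⊕ Unit) → ℝ :=
      Sum.elim (fun i => Sum.elim (A i) (fun _ => c i))
        (fun _ => Sum.elim (fun _ => 0) (fun _ => 1)) with hGfun
    set φ := (WithLp.equiv 2 ((κ ⊕ Unit) → ℝ)).symm with hφ
    set G : (ι ⊕ Unit) → EuclideanSpace ℝ (κ ⊕ Unit) := fun u => φ (Gfun u) with hG
    have hGz : ∀ u z, G u z = Gfun u z := fun u z => rfl
    set bb : EuclideanSpace ℝ (κ ⊕ Unit) := φ (Sum.elim d fun _ => vstar - ε) with hbb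
    have hbbz : ∀ z, bb z = Sum.elim d (fun _ => vstar - ε) z := fun z => rfl
    set K : ConvexCone ℝ (EuclideanSpace ℝ (κ ⊕ Unit)) :=
      { carrier := {x | ∃ lam : (ι ⊕ Unit) → ℝ, (∀ u, 0 ≤ lam u) ∧ x = ∑ u, lam u • G u}
        smul_mem' := by
          rintro r hr x ⟨lam, h0, rfl⟩
          exact ⟨fun u => r * lam u, fun u => mul_nonneg hr.le (h0 u), by
            rw [Finset.smul_sum]; simp [mul_smul]⟩
        add_mem' := by
          rintro x ⟨lam, h0, rfl⟩ y ⟨lam', h0', rfl⟩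
          exact ⟨fun u => lam u + lam' u, fun u => add_nonneg (h0 u) (h0' u), by
            simp [add_smul, Finset.sum_add_distrib]⟩ } with hK
    have hKne : (K : Set (EuclideanSpace ℝ (κ ⊕ Unit))).Nonempty :=
      ⟨∑ u, (0 : ℝ) • G u, fun _ => 0, fun _ => le_rfl, rfl⟩
    have hKcl : IsClosed (K : Set (EuclideanSpace ℝ (κ ⊕ Unit))) := isClosed_fg_cone G
    have hcoord : ∀ (lam : (ι ⊕ Unit) → ℝ) (z : κ ⊕ Unit),
        (∑ u, lam u • G u) z = ∑ u, lam u * Gfun u z := by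
      intro lam z
      rw [euclid_sum_apply]
      exact Finset.sum_congr rfl fun u _ => by rw [euclid_smul_apply, hGz]
    have hbK : bb ∉ K := by
      rintro ⟨lam, hlam0, hbeq⟩
      have hfeas : ∀ j, ∑ i, lam (Sum.inl i) * A i j = d j := by
        intro j
        have h := congrArg (fun x : EuclideanSpace ℝ (κ ⊕ Unit) => x (Sum.inl j)) hbeq
        simp only at h
        rw [hbbz, hcoord] at h
        rw [Fintype.sum_sum_type] at h
        simpa [hGfun] using h.symm
      have hval : ∑ i, lam (Sum.inl i) * c i + lam (Sum.inr ()) = vstar - ε := by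
        have h := congrArg (fun x : EuclideanSpace ℝ (κ ⊕ Unit) => x (Sum.inr ())) hbeq
        simp only at h
        rw [hbbz, hcoord] at h
        rw [Fintype.sum_sum_type] at h
        simpa [hGfun] using h.symm
      have hmem : (∑ i, lam (Sum.inl i) * c i) ∈ P :=
        ⟨fun i => lam (Sum.inl i), fun i => hlam0 _, hfeas, rfl⟩
      have h1 : vstar ≤ ∑ i, lam (Sum.inl i) * c i := csInf_le hbddP hmem
      have h2 : 0 ≤ lam (Sum.inr ()) := hlam0 _
      linarith
    obtain ⟨w, hw1, hw2⟩ :=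
      (by
        let C : ProperCone ℝ (EuclideanSpace ℝ (κ ⊕ Unit)) :=
          { carrier := (K : Set (EuclideanSpace ℝ (κ ⊕ Unit)))
            add_mem' := fun ha hb => K.add_mem ha hb
            zero_mem' := ⟨fun _ => 0, fun _ => le_rfl, by simp⟩
            smul_mem' := by
              rintro ⟨c, hc⟩ x ⟨lam, h0, rfl⟩
              exact ⟨fun u => c * lam u, fun u => mul_nonneg hc (h0 u), by
                rw [Finset.smul_sum]; simp [mul_smul]⟩
            isClosed' := hKcl }
        exact ProperCone.hyperplane_separation' C (by exact hbK))
    have hGmem : ∀ u, G u ∈ K := by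
      intro u
      refine ⟨fun u' => if u' = u then 1 else 0, fun u' => by positivity, ?_⟩
      simp [ite_smul]
    have hinner : ∀ u, 0 ≤ ∑ z, Gfun u z * w z := by
      intro u
      have h := hw1 (G u) (hGmem u)
      rw [euclid_inner] at h
      simpa [hGz] using h
    set s := w (Sum.inr ()) with hs
    have hs0 : 0 ≤ s := by
      have h := hinner (Sum.inr ())
      rw [Fintype.sum_sum_type] at h
      simpa [hGfun] using h
    have hAi : ∀ i, 0 ≤ (∑ j, A i j * w (Sum.inl j)) + c i * s := by
      intro i
      have h := hinner (Sum.inl i)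
      rw [Fintype.sum_sum_type] at h
      simpa [hGfun] using h
    have hbneg : (∑ j, w (Sum.inl j) * d j) + s * (vstar - ε) < 0 := by
      have h := hw2
      rw [euclid_inner] at h
      rw [Fintype.sum_sum_type] at h
      have e : ∑ j, w (Sum.inl j) * d j = ∑ j, d j * w (Sum.inl j) :=
        Finset.sum_congr rfl fun j _ => mul_comm _ _
      simp [hbbz] at h
      rw [e, hs]; linarith
    rcases eq_or_lt_of_le hs0 with hseq | hspos
    · exfalso
      have hAi' : ∀ i, 0 ≤ ∑ j, A i j * w (Sum.inl j) := by
        intro i; have := hAi i; rw [← hseq] at this; simpa using this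
      have h3 : 0 ≤ ∑ j, d j * w (Sum.inl j) := by
        have h4 : ∑ j, d j * w (Sum.inl j) = ∑ i, x₀ i * ∑ j, A i j * w (Sum.inl j) := by
          calc ∑ j, d j * w (Sum.inl j) = ∑ j, (∑ i, x₀ i * A i j) * w (Sum.inl j) :=
                Finset.sum_congr rfl fun j _ => by rw [hx₀ j]
            _ = _ := by
                simp only [Finset.sum_mul, Finset.mul_sum, mul_assoc]
                exact Finset.sum_comm
        rw [h4]
        exact Finset.sum_nonneg fun i _ => mul_nonneg (hx₀0 i) (hAi' i)
      have h5 : ∑ j, w (Sum.inl j) * d j = ∑ j, d j * w (Sum.inl j) :=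
        Finset.sum_congr rfl fun j _ => mul_comm _ _
      rw [h5, ← hseq] at hbneg
      simp at hbneg
      linarith
    · set y : κ → ℝ := fun j => -w (Sum.inl j) / s with hy
      have hyfeas : ∀ i, ∑ j, A i j * y j ≤ c i := by
        intro i
        have heq : ∑ j, A i j * y j = -(∑ j, A i j * w (Sum.inl j)) / s := by
          rw [eq_div_iff hspos.ne', Finset.sum_mul, ← Finset.sum_neg_distrib]
          refine Finset.sum_congr rfl fun j _ => ?_
          simp only [hy]
          field_simp
        rw [heq, div_le_iff₀ hspos]
        nlinarith [hAi i]
      have hyval : vstar - ε ≤ ∑ j, d j * y j := by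
        have heq : ∑ j, d j * y j = -(∑ j, w (Sum.inl j) * d j) / s := by
          rw [eq_div_iff hspos.ne', Finset.sum_mul, ← Finset.sum_neg_distrib]
          refine Finset.sum_congr rfl fun j _ => ?_
          simp only [hy]
          field_simp
          try ring
          try tauto
        rw [heq, le_div_iff₀ hspos]
        nlinarith
      calc vstar - ε ≤ ∑ j, d j * y j := hyval
        _ ≤ sSup D := le_csSup hbddD ⟨y, hyfeas, rfl⟩
  refine le_antisymm ?_ (csSup_le hDne fun vq hq => hDle vq hq)
  refine le_of_forall_pos_le_add fun ε hε => ?_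
  have := key ε hε
  linarith


section OTapp
variable {m n k l : ℕ}

/-- Constraint matrix of the parallel OT linear program. -/
def otA (m n k l : ℕ) : ((Fin m × Fin n) ⊕ (Fin k × Fin l)) →
    ((Fin m ⊕ Fin k) ⊕ (Fin n ⊕ Fin l)) → ℝ
  | .inl p, .inl (.inl i') => if p.1 = i' then 1 else 0
  | .inl p, .inr (.inl j') => if p.2 = j' then 1 else 0
  | .inl _, .inl (.inr _) => 0
  | .inl _, .inr (.inr _) => 0
  | .inr p, .inl (.inr i') => if p.1 = i' then 1 else 0
  | .inr p, .inr (.inr j') => if p.2 = j' then 1 else 0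
  | .inr _, .inl (.inl _) => 0
  | .inr _, .inr (.inl _) => 0

lemma otA_row1 (x : ((Fin m × Fin n) ⊕ (Fin k × Fin l)) → ℝ) (i' : Fin m) :
    ∑ u, x u * otA m n k l u (.inl (.inl i')) = ∑ j, x (.inl (i', j)) := by
  rw [Fintype.sum_sum_type]
  simp only [otA, mul_zero, mul_one, Finset.sum_const_zero, add_zero, mul_ite]
  rw [Fintype.sum_prod_type, Finset.sum_comm]
  simp [Finset.sum_ite_eq']

lemma otA_row2 (x : ((Fin m × Fin n) ⊕ (Fin k × Fin l)) → ℝ) (i' : Fin k) :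
    ∑ u, x u * otA m n k l u (.inl (.inr i')) = ∑ j, x (.inr (i', j)) := by
  rw [Fintype.sum_sum_type]
  simp only [otA, mul_zero, mul_one, Finset.sum_const_zero, zero_add, mul_ite]
  rw [Fintype.sum_prod_type, Finset.sum_comm]
  simp [Finset.sum_ite_eq']

lemma otA_col1 (x : ((Fin m × Fin n) ⊕ (Fin k × Fin l)) → ℝ) (j' : Fin n) :
    ∑ u, x u * otA m n k l u (.inr (.inl j')) = ∑ i, x (.inl (i, j')) := by
  rw [Fintype.sum_sum_type]
  simp only [otA, mul_zero, mul_one, Finset.sum_const_zero, add_zero, mul_ite]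
  rw [Fintype.sum_prod_type]
  simp [Finset.sum_ite_eq']

lemma otA_col2 (x : ((Fin m × Fin n) ⊕ (Fin k × Fin l)) → ℝ) (j' : Fin l) :
    ∑ u, x u * otA m n k l u (.inr (.inr j')) = ∑ i, x (.inr (i, j')) := by
  rw [Fintype.sum_sum_type]
  simp only [otA, mul_zero, mul_one, Finset.sum_const_zero, zero_add, mul_ite]
  rw [Fintype.sum_prod_type]
  simp [Finset.sum_ite_eq']

lemma otA_dual1 (y : ((Fin m ⊕ Fin k) ⊕ (Fin n ⊕ Fin l)) → ℝ) (i : Fin m) (j : Fin n) :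
    ∑ z, otA m n k l (.inl (i, j)) z * y z = y (.inl (.inl i)) + y (.inr (.inl j)) := by
  rw [Fintype.sum_sum_type, Fintype.sum_sum_type, Fintype.sum_sum_type]
  simp only [otA, zero_mul, Finset.sum_const_zero, add_zero, zero_add, ite_mul, one_mul]
  simp [Finset.sum_ite_eq]

lemma otA_dual2 (y : ((Fin m ⊕ Fin k) ⊕ (Fin n ⊕ Fin l)) → ℝ) (i : Fin k) (j : Fin l) :
    ∑ z, otA m n k l (.inr (i, j)) z * y z = y (.inl (.inr i)) + y (.inr (.inr j)) := by
  rw [Fintype.sum_sum_type, Fintype.sum_sum_type, Fintype.sum_sum_type]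
  simp only [otA, zero_mul, Finset.sum_const_zero, add_zero, zero_add, ite_mul, one_mul]
  simp [Finset.sum_ite_eq]

end OTapp

lemma sum_fin_split {m k : ℕ} (F : Fin (m + k) → ℝ) :
    ∑ i, F i = ∑ i : Fin m, F (Fin.castAdd k i) + ∑ i : Fin k, F (Fin.natAdd m i) := by
  rw [← Equiv.sum_comp finSumFinEquiv F, Fintype.sum_sum_type]
  simp [finSumFinEquiv_apply_left, finSumFinEquiv_apply_right]


theorem parOT_strong_duality {m n k l : ℕ}
    (CA : Matrix (Fin m) (Fin n) ℝ) (CB : Matrix (Fin k) (Fin l) ℝ)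
    (a : Fin (m + k) → ℝ) (b : Fin (n + l) → ℝ)
    (ha : (∀ i, 0 ≤ a i) ∧ ∑ i, a i = 1) (hb : (∀ j, 0 ≤ b j) ∧ ∑ j, b j = 1)
    (hbal : ∑ i : Fin m, a (Fin.castAdd k i) = ∑ j : Fin n, b (Fin.castAdd l j)) :
    sInf {v : ℝ | ∃ (PA : Matrix (Fin m) (Fin n) ℝ) (PB : Matrix (Fin k) (Fin l) ℝ),
        (∀ i j, 0 ≤ PA i j) ∧ (∀ i j, 0 ≤ PB i j) ∧
        (∀ i : Fin m, ∑ j, PA i j = a (Fin.castAdd k i)) ∧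
        (∀ j : Fin n, ∑ i, PA i j = b (Fin.castAdd l j)) ∧
        (∀ i : Fin k, ∑ j, PB i j = a (Fin.natAdd m i)) ∧
        (∀ j : Fin l, ∑ i, PB i j = b (Fin.natAdd n j)) ∧
        v = dotM CA PA + dotM CB PB}
    = sSup {v : ℝ | ∃ (f : Fin (m + k) → ℝ) (g : Fin (n + l) → ℝ),
        (∀ (i : Fin m) (j : Fin n), f (Fin.castAdd k i) + g (Fin.castAdd l j) ≤ CA i j) ∧
        (∀ (i : Fin k) (j : Fin l), f (Fin.natAdd m i) + g (Fin.natAdd n j) ≤ CB i j) ∧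
        v = ∑ i, f i * a i + ∑ j, g j * b j} := by
  classical
  obtain ⟨ha0, ha1⟩ := ha
  obtain ⟨hb0, hb1⟩ := hb
  set cc : ((Fin m × Fin n) ⊕ (Fin k × Fin l)) → ℝ :=
    Sum.elim (fun p => CA p.1 p.2) (fun p => CB p.1 p.2) with hcc
  set dd : ((Fin m ⊕ Fin k) ⊕ (Fin n ⊕ Fin l)) → ℝ :=
    Sum.elim (Sum.elim (fun i => a (Fin.castAdd k i)) (fun i => a (Fin.natAdd m i)))
      (Sum.elim (fun j => b (Fin.castAdd l j)) (fun j => b (Fin.natAdd n j))) with hdd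
  -- value identities
  have hval : ∀ x : ((Fin m × Fin n) ⊕ (Fin k × Fin l)) → ℝ,
      ∑ u, x u * cc u = dotM CA (fun i j => x (.inl (i, j))) + dotM CB (fun i j => x (.inr (i, j))) := by
    intro x
    rw [Fintype.sum_sum_type, Fintype.sum_prod_type, Fintype.sum_prod_type]
    simp only [hcc, Sum.elim_inl, Sum.elim_inr, dotM]
    congr 1 <;> exact Finset.sum_congr rfl fun i _ => Finset.sum_congr rfl fun j _ => mul_comm _ _
  have hdval : ∀ y : ((Fin m ⊕ Fin k) ⊕ (Fin n ⊕ Fin l)) → ℝ,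
      ∑ z, dd z * y z = ∑ i, (fun i => y (.inl (finSumFinEquiv.symm i))) i * a i
        + ∑ j, (fun j => y (.inr (finSumFinEquiv.symm j))) j * b j := by
    intro y
    rw [Fintype.sum_sum_type, Fintype.sum_sum_type, Fintype.sum_sum_type,
      sum_fin_split (fun i => y (.inl (finSumFinEquiv.symm i)) * a i),
      sum_fin_split (fun j => y (.inr (finSumFinEquiv.symm j)) * b j)]
    simp only [hdd, Sum.elim_inl, Sum.elim_inr, finSumFinEquiv_symm_apply_castAdd,
      finSumFinEquiv_symm_apply_natAdd]
    simp only [mul_comm]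
  -- primal set identification
  have hPset : {v : ℝ | ∃ (PA : Matrix (Fin m) (Fin n) ℝ) (PB : Matrix (Fin k) (Fin l) ℝ),
        (∀ i j, 0 ≤ PA i j) ∧ (∀ i j, 0 ≤ PB i j) ∧
        (∀ i : Fin m, ∑ j, PA i j = a (Fin.castAdd k i)) ∧
        (∀ j : Fin n, ∑ i, PA i j = b (Fin.castAdd l j)) ∧
        (∀ i : Fin k, ∑ j, PB i j = a (Fin.natAdd m i)) ∧
        (∀ j : Fin l, ∑ i, PB i j = b (Fin.natAdd n j)) ∧
        v = dotM CA PA + dotM CB PB}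
      = {v | ∃ x : ((Fin m × Fin n) ⊕ (Fin k × Fin l)) → ℝ, (∀ i, 0 ≤ x i)
          ∧ (∀ j, ∑ i, x i * otA m n k l i j = dd j) ∧ v = ∑ i, x i * cc i} := by
    ext v
    constructor
    · rintro ⟨PA, PB, h1, h2, h3, h4, h5, h6, rfl⟩
      refine ⟨Sum.elim (fun p => PA p.1 p.2) (fun p => PB p.1 p.2), ?_, ?_, ?_⟩
      · rintro (⟨i, j⟩ | ⟨i, j⟩)
        · exact h1 i j
        · exact h2 i j
      · rintro ((i' | i') | (j' | j'))
        · rw [otA_row1]; simpa [hdd] using h3 i'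
        · rw [otA_row2]; simpa [hdd] using h5 i'
        · rw [otA_col1]; simpa [hdd] using h4 j'
        · rw [otA_col2]; simpa [hdd] using h6 j'
      · rw [hval]; rfl
    · rintro ⟨x, h0, hc, rfl⟩
      refine ⟨fun i j => x (.inl (i, j)), fun i j => x (.inr (i, j)),
        fun i j => h0 _, fun i j => h0 _, ?_, ?_, ?_, ?_, ?_⟩
      · intro i; have := hc (.inl (.inl i)); rw [otA_row1] at this; simpa [hdd] using this
      · intro j; have := hc (.inr (.inl j)); rw [otA_col1] at this; simpa [hdd] using this
      · intro i; have := hc (.inl (.inr i)); rw [otA_row2] at this; simpa [hdd] using this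
      · intro j; have := hc (.inr (.inr j)); rw [otA_col2] at this; simpa [hdd] using this
      · rw [hval]
  -- dual set identification
  have hDset : {v : ℝ | ∃ (f : Fin (m + k) → ℝ) (g : Fin (n + l) → ℝ),
        (∀ (i : Fin m) (j : Fin n), f (Fin.castAdd k i) + g (Fin.castAdd l j) ≤ CA i j) ∧
        (∀ (i : Fin k) (j : Fin l), f (Fin.natAdd m i) + g (Fin.natAdd n j) ≤ CB i j) ∧
        v = ∑ i, f i * a i + ∑ j, g j * b j}
      = {v | ∃ y : ((Fin m ⊕ Fin k) ⊕ (Fin n ⊕ Fin l)) → ℝ,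
          (∀ i, ∑ j, otA m n k l i j * y j ≤ cc i) ∧ v = ∑ j, dd j * y j} := by
    ext v
    constructor
    · rintro ⟨f, g, hfg1, hfg2, rfl⟩
      refine ⟨Sum.elim (fun w => f (finSumFinEquiv w)) (fun w => g (finSumFinEquiv w)), ?_, ?_⟩
      · rintro (⟨i, j⟩ | ⟨i, j⟩)
        · rw [otA_dual1]
          simpa [finSumFinEquiv_apply_left, hcc] using hfg1 i j
        · rw [otA_dual2]
          simpa [finSumFinEquiv_apply_right, hcc] using hfg2 i j
      · rw [hdval]
        simp [Equiv.symm_apply_apply]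
    · rintro ⟨y, hyc, rfl⟩
      refine ⟨fun i => y (.inl (finSumFinEquiv.symm i)), fun j => y (.inr (finSumFinEquiv.symm j)),
        ?_, ?_, ?_⟩
      · intro i j
        have := hyc (.inl (i, j)); rw [otA_dual1] at this
        simpa [finSumFinEquiv_symm_apply_castAdd, hcc] using this
      · intro i j
        have := hyc (.inr (i, j)); rw [otA_dual2] at this
        simpa [finSumFinEquiv_symm_apply_natAdd, hcc] using this
      · rw [hdval]
  -- primal feasibility
  set s : ℝ := ∑ i : Fin m, a (Fin.castAdd k i) with hsdef
  have hs0 : 0 ≤ s := Finset.sum_nonneg fun i _ => ha0 _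
  have hbs : ∑ j : Fin n, b (Fin.castAdd l j) = s := hbal.symm
  have hsplit_a : s + ∑ i : Fin k, a (Fin.natAdd m i) = 1 := by
    rw [hsdef, ← sum_fin_split a]; exact ha1
  have hsplit_b : s + ∑ j : Fin l, b (Fin.natAdd n j) = 1 := by
    rw [← hbs, ← sum_fin_split b]; exact hb1
  have ht0 : 0 ≤ 1 - s := by
    have : (0:ℝ) ≤ ∑ i : Fin k, a (Fin.natAdd m i) := Finset.sum_nonneg fun i _ => ha0 _
    linarith
  have hta : ∑ i : Fin k, a (Fin.natAdd m i) = 1 - s := by linarith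
  have htb : ∑ j : Fin l, b (Fin.natAdd n j) = 1 - s := by linarith
  have hazero : s = 0 → ∀ i : Fin m, a (Fin.castAdd k i) = 0 := by
    intro hs i
    exact (Finset.sum_eq_zero_iff_of_nonneg fun i _ => ha0 _).mp (hsdef ▸ hs) i (Finset.mem_univ i)
  have hbzero : s = 0 → ∀ j : Fin n, b (Fin.castAdd l j) = 0 := by
    intro hs j
    exact (Finset.sum_eq_zero_iff_of_nonneg fun j _ => hb0 _).mp (hbs.trans hs) j (Finset.mem_univ j)
  have hazero' : 1 - s = 0 → ∀ i : Fin k, a (Fin.natAdd m i) = 0 := by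
    intro hs i
    exact (Finset.sum_eq_zero_iff_of_nonneg fun i _ => ha0 _).mp (hta.trans hs) i (Finset.mem_univ i)
  have hbzero' : 1 - s = 0 → ∀ j : Fin l, b (Fin.natAdd n j) = 0 := by
    intro hs j
    exact (Finset.sum_eq_zero_iff_of_nonneg fun j _ => hb0 _).mp (htb.trans hs) j (Finset.mem_univ j)
  have hP : ∃ x : ((Fin m × Fin n) ⊕ (Fin k × Fin l)) → ℝ, (∀ i, 0 ≤ x i)
      ∧ (∀ j, ∑ i, x i * otA m n k l i j = dd j) := by
    refine ⟨Sum.elim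
      (fun p => if s = 0 then 0 else a (Fin.castAdd k p.1) * b (Fin.castAdd l p.2) / s)
      (fun p => if 1 - s = 0 then 0 else a (Fin.natAdd m p.1) * b (Fin.natAdd n p.2) / (1 - s)),
      ?_, ?_⟩
    · rintro (⟨i, j⟩ | ⟨i, j⟩) <;> dsimp only [Sum.elim_inl, Sum.elim_inr] <;> split_ifs
      · exact le_rfl
      · exact div_nonneg (mul_nonneg (ha0 _) (hb0 _)) hs0
      · exact le_rfl
      · exact div_nonneg (mul_nonneg (ha0 _) (hb0 _)) ht0
    · rintro ((i' | i') | (j' | j'))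
      · rw [otA_row1]
        simp only [Sum.elim_inl, hdd]
        split_ifs with hs
        · simp [hazero hs i']
        · rw [← Finset.sum_div, ← Finset.mul_sum, hbs]
          field_simp
      · rw [otA_row2]
        simp only [Sum.elim_inr, hdd, Sum.elim_inl]
        split_ifs with hs
        · simp [hazero' hs i']
        · rw [← Finset.sum_div, ← Finset.mul_sum, htb]
          field_simp
      · rw [otA_col1]
        simp only [Sum.elim_inl, hdd, Sum.elim_inr]
        split_ifs with hs
        · simp [hbzero hs j']
        · rw [← Finset.sum_div, ← Finset.sum_mul, hsdef]
          rw [← hsdef]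
          field_simp
      · rw [otA_col2]
        simp only [Sum.elim_inr, hdd]
        split_ifs with hs
        · simp [hbzero' hs j']
        · rw [← Finset.sum_div, ← Finset.sum_mul, hta]
          field_simp
  -- dual feasibility
  have hD : ∃ y : ((Fin m ⊕ Fin k) ⊕ (Fin n ⊕ Fin l)) → ℝ,
      ∀ i, ∑ j, otA m n k l i j * y j ≤ cc i := by
    obtain ⟨M, hM⟩ := Finite.exists_le (fun u => -(cc u))
    refine ⟨Sum.elim (fun _ => -M) (fun _ => 0), ?_⟩
    rintro (⟨i, j⟩ | ⟨i, j⟩)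
    · rw [otA_dual1]
      have := hM (.inl (i, j))
      simp only [Sum.elim_inl, Sum.elim_inr, add_zero]
      simp only [hcc, Sum.elim_inl] at this ⊢
      linarith
    · rw [otA_dual2]
      have := hM (.inr (i, j))
      simp only [Sum.elim_inl, Sum.elim_inr, add_zero]
      simp only [hcc, Sum.elim_inr] at this ⊢
      linarith
  rw [hPset, hDset]
  obtain ⟨x₀, hx₀1, hx₀2⟩ := hP
  exact lp_strong_duality _ _ _ ⟨x₀, hx₀1, hx₀2⟩ hD
end LP
end

section
/- Any transportation plan of a sequentially composed OT yields a coupling with cost at least the tropical composition cost: if P^A ∈ ℝ_{≥0}^(m×l), P^B ∈ ℝ_{≥0}^(l×n) are feasible for the sequentially composed OT with marginals a, b, then ⟨C^A, P^A⟩ + ⟨C^B, P^B⟩ ≥ min over couplings P of a, b of ⟨C^A ⨟ C^B, P⟩. -/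
open BigOperators

theorem seq_plan_cost_ge_monolithic {m l n : ℕ} (hl : 0 < l)
    (CA : Matrix (Fin m) (Fin l) ℝ) (CB : Matrix (Fin l) (Fin n) ℝ)
    (a : Fin m → ℝ) (b : Fin n → ℝ)
    (ha : (∀ i, 0 ≤ a i) ∧ ∑ i, a i = 1) (hb : (∀ j, 0 ≤ b j) ∧ ∑ j, b j = 1)
    (PA : Matrix (Fin m) (Fin l) ℝ) (PB : Matrix (Fin l) (Fin n) ℝ)
    (hPA : ∀ i k, 0 ≤ PA i k) (hPB : ∀ k j, 0 ≤ PB k j)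
    (hPAa : ∀ i, ∑ k, PA i k = a i) (hPBb : ∀ j, ∑ k, PB k j = b j)
    (hglue : ∀ k, ∑ i, PA i k = ∑ j, PB k j) :
    sInf {v : ℝ | ∃ P : Matrix (Fin m) (Fin n) ℝ,
        (∀ i j, 0 ≤ P i j) ∧ (∀ i, ∑ j, P i j = a i) ∧ (∀ j, ∑ i, P i j = b j) ∧
        v = dotM (seqR CA CB) P}
      ≤ dotM CA PA + dotM CB PB := by
  classical
  haveI : Nonempty (Fin l) := ⟨⟨0, hl⟩⟩
  set μ : Fin l → ℝ := fun k => ∑ i, PA i k with hμdef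
  have hμ0 : ∀ k, 0 ≤ μ k := fun k => Finset.sum_nonneg fun i _ => hPA i k
  have hPAz : ∀ k, ¬ 0 < μ k → ∀ i, PA i k = 0 := by
    intro k hk i
    have h0 : μ k = 0 := le_antisymm (not_lt.mp hk) (hμ0 k)
    have := (Finset.sum_eq_zero_iff_of_nonneg (fun i _ => hPA i k)).mp h0
    exact this i (Finset.mem_univ i)
  have hPBz : ∀ k, ¬ 0 < μ k → ∀ j, PB k j = 0 := by
    intro k hk j
    have h0 : μ k = 0 := le_antisymm (not_lt.mp hk) (hμ0 k)
    have h0' : ∑ j, PB k j = 0 := by rw [← hglue k]; exact h0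
    have := (Finset.sum_eq_zero_iff_of_nonneg (fun j _ => hPB k j)).mp h0'
    exact this j (Finset.mem_univ j)
  have hμB : ∀ k, ∑ j, PB k j = μ k := fun k => (hglue k).symm
  set P : Matrix (Fin m) (Fin n) ℝ :=
    fun i j => ∑ k, if 0 < μ k then PA i k * PB k j / μ k else 0 with hPdef
  have hP0 : ∀ i j, 0 ≤ P i j := by
    intro i j
    refine Finset.sum_nonneg fun k _ => ?_
    split
    · exact div_nonneg (mul_nonneg (hPA i k) (hPB k j)) (hμ0 k)
    · exact le_refl 0
  have hProw : ∀ i, ∑ j, P i j = a i := by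
    intro i
    rw [← hPAa i]
    simp only [hPdef]
    rw [Finset.sum_comm]
    refine Finset.sum_congr rfl fun k _ => ?_
    by_cases hk : 0 < μ k
    · simp only [if_pos hk]
      rw [← Finset.sum_div, ← Finset.mul_sum, hμB k, mul_div_assoc,
        div_self hk.ne', mul_one]
    · simp [if_neg hk, hPAz k hk i]
  have hPcol : ∀ j, ∑ i, P i j = b j := by
    intro j
    rw [← hPBb j]
    simp only [hPdef]
    rw [Finset.sum_comm]
    refine Finset.sum_congr rfl fun k _ => ?_
    by_cases hk : 0 < μ k
    · simp only [if_pos hk]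
      rw [← Finset.sum_div]
      rw [← Finset.sum_mul, mul_comm, mul_div_assoc, div_self hk.ne', mul_one]
    · simp [if_neg hk, hPBz k hk j]
  -- cost bound
  have hcost : dotM (seqR CA CB) P ≤ dotM CA PA + dotM CB PB := by
    have key : dotM (seqR CA CB) P ≤
        ∑ k, ∑ i, ∑ j, if 0 < μ k then (CA i k + CB k j) * (PA i k * PB k j / μ k) else 0 := by
      unfold dotM
      have : ∀ i j, seqR CA CB i j * P i j ≤
          ∑ k, if 0 < μ k then (CA i k + CB k j) * (PA i k * PB k j / μ k) else 0 := by
        intro i j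
        rw [hPdef]
        rw [Finset.mul_sum]
        refine Finset.sum_le_sum fun k _ => ?_
        by_cases hk : 0 < μ k
        · simp only [if_pos hk]
          refine mul_le_mul_of_nonneg_right ?_
            (div_nonneg (mul_nonneg (hPA i k) (hPB k j)) (hμ0 k))
          exact ciInf_le (Set.Finite.bddBelow (Set.finite_range _)) k
        · simp [if_neg hk]
      calc ∑ i, ∑ j, seqR CA CB i j * P i j
          ≤ ∑ i, ∑ j, ∑ k, (if 0 < μ k then (CA i k + CB k j) * (PA i k * PB k j / μ k) else 0) :=
            Finset.sum_le_sum fun i _ => Finset.sum_le_sum fun j _ => this i j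
        _ = ∑ k, ∑ i, ∑ j, (if 0 < μ k then (CA i k + CB k j) * (PA i k * PB k j / μ k) else 0) := by
            have h1 : ∀ i : Fin m, (∑ j, ∑ k,
                (if 0 < μ k then (CA i k + CB k j) * (PA i k * PB k j / μ k) else 0))
                = ∑ k, ∑ j, (if 0 < μ k then (CA i k + CB k j) * (PA i k * PB k j / μ k) else 0) :=
              fun i => Finset.sum_comm
            simp only [h1]
            exact Finset.sum_comm
    refine key.trans_eq ?_
    have hk : ∀ k, (∑ i, ∑ j, if 0 < μ k then (CA i k + CB k j) * (PA i k * PB k j / μ k) else 0)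
        = (∑ i, CA i k * PA i k) + (∑ j, CB k j * PB k j) := by
      intro k
      by_cases hk : 0 < μ k
      · simp only [if_pos hk]
        have : ∀ i j, (CA i k + CB k j) * (PA i k * PB k j / μ k)
            = CA i k * PA i k * (PB k j / μ k) + CB k j * PB k j * (PA i k / μ k) := by
          intro i j; field_simp
        simp only [this, Finset.sum_add_distrib]
        congr 1
        · refine Finset.sum_congr rfl fun i _ => ?_
          rw [← Finset.mul_sum, ← Finset.sum_div, hμB k, div_self hk.ne', mul_one]
        · refine Eq.trans (Finset.sum_comm (s := Finset.univ) (t := Finset.univ)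
            (f := fun i j => CB k j * PB k j * (PA i k / μ k))) ?_
          refine Finset.sum_congr rfl fun j _ => ?_
          rw [← Finset.mul_sum, ← Finset.sum_div, div_self hk.ne', mul_one]
      · simp only [if_neg hk]
        simp [hPAz k hk, hPBz k hk]
    rw [Finset.sum_congr rfl fun k _ => hk k, Finset.sum_add_distrib]
    unfold dotM
    rw [Finset.sum_comm]
  -- membership & bddBelow
  set S := {v : ℝ | ∃ P : Matrix (Fin m) (Fin n) ℝ,
      (∀ i j, 0 ≤ P i j) ∧ (∀ i, ∑ j, P i j = a i) ∧ (∀ j, ∑ i, P i j = b j) ∧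
      v = dotM (seqR CA CB) P} with hS
  have hmem : dotM (seqR CA CB) P ∈ S := ⟨P, hP0, hProw, hPcol, rfl⟩
  have hbdd : BddBelow S := by
    refine ⟨∑ i, ∑ j, -(|seqR CA CB i j|), ?_⟩
    rintro v ⟨Q, hQ0, hQr, hQc, rfl⟩
    unfold dotM
    refine Finset.sum_le_sum fun i _ => Finset.sum_le_sum fun j _ => ?_
    have hQle : Q i j ≤ 1 := by
      have h1 : Q i j ≤ ∑ j', Q i j' :=
        Finset.single_le_sum (fun j' _ => hQ0 i j') (Finset.mem_univ j)
      have h2 : a i ≤ 1 := by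
        rw [← ha.2]
        exact Finset.single_le_sum (fun i' _ => ha.1 i') (Finset.mem_univ i)
      exact h1.trans (by rw [hQr i]; exact h2)
    calc -(|seqR CA CB i j|) ≤ -(|seqR CA CB i j|) * Q i j := by
          rcases eq_or_lt_of_le (hQ0 i j) with h | h
          · nlinarith [abs_nonneg (seqR CA CB i j)]
          · nlinarith [abs_nonneg (seqR CA CB i j)]
      _ ≤ seqR CA CB i j * Q i j := by
          have := neg_abs_le (seqR CA CB i j)
          nlinarith [hQ0 i j]
  exact (csInf_le hbdd hmem).trans hcost
end
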